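/- arXiv:2003.13281 — 6 statements merged into one kernel-verified Lean document; each statement's English description precedes it below -/
import Mathlib

section
/- Let p be a prime and (m,n1,n2,s1,s2) an admissible tuple for p, and let G = G_p(m,n1,n2,s1,s2) with generators b1, b2. Then the commutator subgroup G' is the cyclic subgroup generated by [b2,b1] and has order p^m. -/
open scoped commutatorElement

/-- Discrete Heisenberg group over ℤ. -/
@[ext] structure H3 where
  x : ℤ
  y : ℤ
  z : ℤ

namespace H3

instance : Mul H3 := ⟨fun a b => ⟨a.x + b.x, a.y + b.y, a.z + b.z + a.y * b.x⟩⟩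
instance : One H3 := ⟨⟨0, 0, 0⟩⟩
instance : Inv H3 := ⟨fun a => ⟨-a.x, -a.y, -a.z + a.y * a.x⟩⟩

@[simp] lemma mul_x (a b : H3) : (a * b).x = a.x + b.x := rfl
@[simp] lemma mul_y (a b : H3) : (a * b).y = a.y + b.y := rfl
@[simp] lemma mul_z (a b : H3) : (a * b).z = a.z + b.z + a.y * b.x := rfl
@[simp] lemma one_x : (1 : H3).x = 0 := rfl
@[simp] lemma one_y : (1 : H3).y = 0 := rfl
@[simp] lemma one_z : (1 : H3).z = 0 := rfl
@[simp] lemma inv_x (a : H3) : (a⁻¹).x = -a.x := rfl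
@[simp] lemma inv_y (a : H3) : (a⁻¹).y = -a.y := rfl
@[simp] lemma inv_z (a : H3) : (a⁻¹).z = -a.z + a.y * a.x := rfl

instance : Group H3 where
  mul_assoc a b c := by ext <;> simp <;> ring
  one_mul a := by ext <;> simp
  mul_one a := by ext <;> simp
  inv_mul_cancel a := by ext <;> simp <;> ring

def B1 : H3 := ⟨1, 0, 0⟩
def B2 : H3 := ⟨0, 1, 0⟩
def A : H3 := ⟨0, 0, 1⟩

@[simp] lemma B1_pow (n : ℕ) : B1 ^ n = ⟨(n : ℤ), 0, 0⟩ := by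
  induction n with
  | zero => ext <;> simp
  | succ k ih => rw [pow_succ, ih]; ext <;> simp [B1] <;> push_cast <;> ring

@[simp] lemma B2_pow (n : ℕ) : B2 ^ n = ⟨0, (n : ℤ), 0⟩ := by
  induction n with
  | zero => ext <;> simp
  | succ k ih => rw [pow_succ, ih]; ext <;> simp [B2] <;> push_cast <;> ring

@[simp] lemma A_pow (n : ℕ) : A ^ n = ⟨0, 0, (n : ℤ)⟩ := by
  induction n with
  | zero => ext <;> simp
  | succ k ih => rw [pow_succ, ih]; ext <;> simp [A] <;> push_cast <;> ring

lemma comm_eq : B2⁻¹ * B1⁻¹ * B2 * B1 = A := by ext <;> simp [B1, B2, A]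

end H3

open H3 in
/-- The normal subgroup of `H3` by which we quotient to obtain a model of the presented group. -/
def NSub (p m n1 n2 s1 s2 : ℕ) (h1 : m ≤ n1) (h2 : m ≤ n2) : Subgroup H3 where
  carrier := {g | ∃ u v : ℤ, g.x = u * (p : ℤ) ^ n1 ∧ g.y = v * (p : ℤ) ^ n2 ∧
      (p : ℤ) ^ m ∣ g.z + u * (p : ℤ) ^ s1 + v * (p : ℤ) ^ s2}
  one_mem' := ⟨0, 0, by simp⟩
  mul_mem' := by
    rintro a b ⟨u, v, hx, hy, hd⟩ ⟨u', v', hx', hy', hd'⟩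
    refine ⟨u + u', v + v', by rw [mul_x, hx, hx']; ring, by rw [mul_y, hy, hy']; ring, ?_⟩
    have key : (a * b).z + (u + u') * (p:ℤ) ^ s1 + (v + v') * (p:ℤ) ^ s2 =
        (a.z + u * (p:ℤ) ^ s1 + v * (p:ℤ) ^ s2) + (b.z + u' * (p:ℤ) ^ s1 + v' * (p:ℤ) ^ s2)
          + v * (p:ℤ) ^ n2 * b.x := by rw [mul_z, hy]; ring
    rw [key]
    exact dvd_add (dvd_add hd hd') (((pow_dvd_pow (p:ℤ) h2).mul_left v).mul_right b.x)
  inv_mem' := by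
    rintro a ⟨u, v, hx, hy, hd⟩
    refine ⟨-u, -v, by rw [inv_x, hx]; ring, by rw [inv_y, hy]; ring, ?_⟩
    have key : (a⁻¹).z + (-u) * (p:ℤ) ^ s1 + (-v) * (p:ℤ) ^ s2 =
        -(a.z + u * (p:ℤ) ^ s1 + v * (p:ℤ) ^ s2) + v * (p:ℤ) ^ n2 * (u * (p:ℤ)^n1) := by
      rw [inv_z, hy, hx]; ring
    rw [key]
    exact dvd_add (dvd_neg.mpr hd) (((pow_dvd_pow (p:ℤ) h2).mul_left v).mul_right _)

lemma mem_NSub {p m n1 n2 s1 s2 : ℕ} {h1 : m ≤ n1} {h2 : m ≤ n2} {g : H3} :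
    g ∈ NSub p m n1 n2 s1 s2 h1 h2 ↔ ∃ u v : ℤ, g.x = u * (p : ℤ) ^ n1 ∧
      g.y = v * (p : ℤ) ^ n2 ∧ (p : ℤ) ^ m ∣ g.z + u * (p : ℤ) ^ s1 + v * (p : ℤ) ^ s2 :=
  Iff.rfl

lemma NSub_normal (p m n1 n2 s1 s2 : ℕ) (h1 : m ≤ n1) (h2 : m ≤ n2) :
    (NSub p m n1 n2 s1 s2 h1 h2).Normal := by
  constructor
  intro n hn g
  obtain ⟨u, v, hx, hy, hd⟩ := hn
  refine ⟨u, v, by simp only [H3.mul_x, H3.inv_x, hx]; ring,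
    by simp only [H3.mul_y, H3.inv_y, hy]; ring, ?_⟩
  have key : (g * n * g⁻¹).z + u * (p:ℤ) ^ s1 + v * (p:ℤ) ^ s2 =
      (n.z + u * (p:ℤ) ^ s1 + v * (p:ℤ) ^ s2) + g.y * (u * (p:ℤ) ^ n1)
        - g.x * (v * (p:ℤ) ^ n2) := by
    simp only [H3.mul_z, H3.mul_x, H3.mul_y, H3.inv_z, H3.inv_x, H3.inv_y, hx, hy]; ring
  rw [key]
  exact dvd_sub (dvd_add hd (((pow_dvd_pow (p:ℤ) h1).mul_left u).mul_left g.y))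
    (((pow_dvd_pow (p:ℤ) h2).mul_left v).mul_left g.x)

lemma mk_A_pow_eq_one_iff (p m n1 n2 s1 s2 : ℕ) (hp : p.Prime) (h1 : m ≤ n1) (h2 : m ≤ n2)
    (t : ℕ) :
    haveI := NSub_normal p m n1 n2 s1 s2 h1 h2
    ((QuotientGroup.mk H3.A : H3 ⧸ NSub p m n1 n2 s1 s2 h1 h2) ^ t = 1 ↔ p ^ m ∣ t) := by
  haveI := NSub_normal p m n1 n2 s1 s2 h1 h2
  have hpz : (p : ℤ) ≠ 0 := by exact_mod_cast hp.ne_zero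
  rw [← QuotientGroup.mk_pow, QuotientGroup.eq_one_iff, H3.A_pow, mem_NSub]
  constructor
  · rintro ⟨u, v, hx, hy, hd⟩
    have hu : u = 0 := by
      rcases mul_eq_zero.mp hx.symm with h | h
      · exact h
      · exact absurd h (pow_ne_zero _ hpz)
    have hv : v = 0 := by
      rcases mul_eq_zero.mp hy.symm with h | h
      · exact h
      · exact absurd h (pow_ne_zero _ hpz)
    subst hu hv
    simp only [zero_mul, add_zero] at hd
    exact_mod_cast Int.natCast_dvd_natCast.mp (by push_cast at hd ⊢; exact hd)
  · intro ht
    exact ⟨0, 0, by simp, by simp, by simpa using Int.natCast_dvd_natCast.mpr ht⟩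

lemma orderOf_mk_A (p m n1 n2 s1 s2 : ℕ) (hp : p.Prime) (h1 : m ≤ n1) (h2 : m ≤ n2) :
    haveI := NSub_normal p m n1 n2 s1 s2 h1 h2
    orderOf (QuotientGroup.mk H3.A : H3 ⧸ NSub p m n1 n2 s1 s2 h1 h2) = p ^ m := by
  haveI := NSub_normal p m n1 n2 s1 s2 h1 h2
  refine Nat.dvd_antisymm
    (orderOf_dvd_of_pow_eq_one ((mk_A_pow_eq_one_iff p m n1 n2 s1 s2 hp h1 h2 _).mpr dvd_rfl))
    ((mk_A_pow_eq_one_iff p m n1 n2 s1 s2 hp h1 h2 _).mp (pow_orderOf_eq_one _))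


/-- The set of relators for the presented group `G_p(m,n1,n2,s1,s2)` on two generators
`b1, b2`, with `a = [b2,b1] = b2⁻¹ * b1⁻¹ * b2 * b1`:
`a ^ p^m = 1`, `[b1,a] = 1`, `[b2,a] = 1`, `b1 ^ p^n1 = a ^ p^s1`, `b2 ^ p^n2 = a ^ p^s2`. -/
def pgRels (p m n1 n2 s1 s2 : ℕ) : Set (FreeGroup (Fin 2)) :=
  let b1 : FreeGroup (Fin 2) := FreeGroup.of 0
  let b2 : FreeGroup (Fin 2) := FreeGroup.of 1
  let a : FreeGroup (Fin 2) := b2⁻¹ * b1⁻¹ * b2 * b1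
  {a ^ p ^ m,
   b1⁻¹ * a⁻¹ * b1 * a,
   b2⁻¹ * a⁻¹ * b2 * a,
   b1 ^ p ^ n1 * (a ^ p ^ s1)⁻¹,
   b2 ^ p ^ n2 * (a ^ p ^ s2)⁻¹}

/-- The group `G_p(m,n1,n2,s1,s2)` given by the presentation
`⟨b1, b2 ∣ [b2,b1]^(p^m) = [b1,[b2,b1]] = [b2,[b2,b1]] = 1,
  b1^(p^n1) = [b2,b1]^(p^s1), b2^(p^n2) = [b2,b1]^(p^s2)⟩`. -/
abbrev GG (p m n1 n2 s1 s2 : ℕ) : Type := PresentedGroup (pgRels p m n1 n2 s1 s2)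

/-- A tuple `(m,n1,n2,s1,s2)` is admissible for the prime `p` if:
(A1) `0 < m` and `s1 ≤ m`, `s2 ≤ m ≤ n2 ≤ n1`;
(A2) `n1 - s1 ≥ n2 - s2` (stated without truncated subtraction);
(A3) if `p = 2` then `s1 < n1`;
(A4) either `s1 ≥ s2`, or `p = 2` and `n1 = n2 = m = s2 = s1 + 1`. -/
def Admissible (p m n1 n2 s1 s2 : ℕ) : Prop :=
  (0 < m ∧ s1 ≤ m ∧ s2 ≤ m ∧ m ≤ n2 ∧ n2 ≤ n1) ∧
  n2 + s1 ≤ n1 + s2 ∧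
  (p = 2 → s1 < n1) ∧
  (s2 ≤ s1 ∨ (p = 2 ∧ n1 = n2 ∧ n2 = m ∧ m = s2 ∧ s2 = s1 + 1))

/-- For an admissible tuple, the commutator subgroup of `G = G_p(m,n1,n2,s1,s2)` is the
cyclic subgroup generated by `[b2,b1] = b2⁻¹ * b1⁻¹ * b2 * b1` and has order `p^m`. -/
theorem commutator_subgroup_of_presented_group
    (p : ℕ) (hp : p.Prime) (m n1 n2 s1 s2 : ℕ) (h : Admissible p m n1 n2 s1 s2) :
    let b1 : GG p m n1 n2 s1 s2 := PresentedGroup.of 0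
    let b2 : GG p m n1 n2 s1 s2 := PresentedGroup.of 1
    commutator (GG p m n1 n2 s1 s2) = Subgroup.closure {b2⁻¹ * b1⁻¹ * b2 * b1} ∧
    Nat.card ↥(commutator (GG p m n1 n2 s1 s2)) = p ^ m := by
  obtain ⟨⟨hm, hs1m, hs2m, h2, hn2n1⟩, -, -, -⟩ := h
  have h1 : m ≤ n1 := le_trans h2 hn2n1
  intro b1 b2
  haveI := NSub_normal p m n1 n2 s1 s2 h1 h2
  set N := NSub p m n1 n2 s1 s2 h1 h2 with hN
  -- the model quotient group
  let f : Fin 2 → H3 ⧸ N := ![QuotientGroup.mk H3.B1, QuotientGroup.mk H3.B2]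
  have hf0 : f 0 = QuotientGroup.mk H3.B1 := rfl
  have hf1 : f 1 = QuotientGroup.mk H3.B2 := rfl
  have hcA : ((QuotientGroup.mk H3.B2 : H3 ⧸ N))⁻¹ * (QuotientGroup.mk H3.B1)⁻¹ *
      QuotientGroup.mk H3.B2 * QuotientGroup.mk H3.B1 = QuotientGroup.mk H3.A := by
    rw [← QuotientGroup.mk_inv, ← QuotientGroup.mk_inv, ← QuotientGroup.mk_mul,
      ← QuotientGroup.mk_mul, ← QuotientGroup.mk_mul, H3.comm_eq]
  have hf : ∀ r ∈ pgRels p m n1 n2 s1 s2, FreeGroup.lift f r = 1 := by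
    intro r hr
    simp only [pgRels, Set.mem_insert_iff, Set.mem_singleton_iff] at hr
    rcases hr with rfl | rfl | rfl | rfl | rfl <;>
      simp only [map_mul, map_inv, map_pow, FreeGroup.lift_apply_of, hf0, hf1, hcA]
    · rw [← QuotientGroup.mk_pow, QuotientGroup.eq_one_iff]
      refine ⟨0, 0, by simp [H3.A_pow], by simp [H3.A_pow], ?_⟩
      rw [H3.A_pow]
      simp only [zero_mul, add_zero]
      push_cast
      exact dvd_refl _
    · rw [← QuotientGroup.mk_inv, ← QuotientGroup.mk_inv, ← QuotientGroup.mk_mul,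
        ← QuotientGroup.mk_mul, ← QuotientGroup.mk_mul]
      have : H3.B1⁻¹ * H3.A⁻¹ * H3.B1 * H3.A = 1 := by
        ext <;> simp [H3.B1, H3.A]
      rw [this, QuotientGroup.mk_one]
    · rw [← QuotientGroup.mk_inv, ← QuotientGroup.mk_inv, ← QuotientGroup.mk_mul,
        ← QuotientGroup.mk_mul, ← QuotientGroup.mk_mul]
      have : H3.B2⁻¹ * H3.A⁻¹ * H3.B2 * H3.A = 1 := by
        ext <;> simp [H3.B2, H3.A]
      rw [this, QuotientGroup.mk_one]
    · rw [← QuotientGroup.mk_pow, ← QuotientGroup.mk_pow, ← QuotientGroup.mk_inv,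
        ← QuotientGroup.mk_mul, QuotientGroup.eq_one_iff]
      refine ⟨1, 0, ?_, ?_, ?_⟩ <;>
        simp [H3.B1_pow, H3.A_pow]
    · rw [← QuotientGroup.mk_pow, ← QuotientGroup.mk_pow, ← QuotientGroup.mk_inv,
        ← QuotientGroup.mk_mul, QuotientGroup.eq_one_iff]
      refine ⟨0, 1, ?_, ?_, ?_⟩ <;>
        simp [H3.B2_pow, H3.A_pow]
  let φ : GG p m n1 n2 s1 s2 →* H3 ⧸ N := PresentedGroup.toGroup hf
  set ag : GG p m n1 n2 s1 s2 := b2⁻¹ * b1⁻¹ * b2 * b1 with hag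
  have hφ1 : φ b1 = QuotientGroup.mk H3.B1 := PresentedGroup.toGroup.of hf
  have hφ2 : φ b2 = QuotientGroup.mk H3.B2 := PresentedGroup.toGroup.of hf
  have hφa : φ ag = QuotientGroup.mk H3.A := by
    rw [hag]
    simp only [map_mul, map_inv, hφ1, hφ2]
    exact hcA
  -- relations in GG
  have hrel : ∀ r ∈ pgRels p m n1 n2 s1 s2,
      PresentedGroup.mk (pgRels p m n1 n2 s1 s2) r = 1 := fun r hr =>
    (QuotientGroup.eq_one_iff r).mpr (Subgroup.subset_normalClosure hr)
  have hmem1 : (FreeGroup.of 1)⁻¹ * (FreeGroup.of 0)⁻¹ * FreeGroup.of 1 * FreeGroup.of 0 ∈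
      (Set.univ : Set (FreeGroup (Fin 2))) := trivial
  have hapow : ag ^ p ^ m = 1 := by
    have := hrel _ (Set.mem_insert _ _)
    simp only [map_pow, map_mul, map_inv] at this
    exact this
  have hc1 : Commute ag b1 := by
    have := hrel _ (Set.mem_insert_of_mem _ (Set.mem_insert _ _))
    simp only [map_mul, map_inv] at this
    have h' : ⁅b1⁻¹, ag⁻¹⁆ = 1 := by
      rw [commutatorElement_def, inv_inv, inv_inv, hag]
      exact this
    have := commutatorElement_eq_one_iff_commute.mp h'
    simpa using this.inv_inv.symm
  have hc2 : Commute ag b2 := by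
    have := hrel _ (Set.mem_insert_of_mem _ (Set.mem_insert_of_mem _ (Set.mem_insert _ _)))
    simp only [map_mul, map_inv] at this
    have h' : ⁅b2⁻¹, ag⁻¹⁆ = 1 := by
      rw [commutatorElement_def, inv_inv, inv_inv, hag]
      exact this
    have := commutatorElement_eq_one_iff_commute.mp h'
    simpa using this.inv_inv.symm
  have hag_comm : ag = ⁅b2⁻¹, b1⁻¹⁆ := by
    rw [commutatorElement_def, inv_inv, inv_inv, hag]
  -- generation
  have htop : Subgroup.closure ({b1, b2} : Set (GG p m n1 n2 s1 s2)) = ⊤ := by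
    rw [eq_top_iff, ← PresentedGroup.closure_range_of (pgRels p m n1 n2 s1 s2)]
    apply Subgroup.closure_mono
    rintro x ⟨i, rfl⟩
    fin_cases i
    · exact Set.mem_insert _ _
    · exact Set.mem_insert_of_mem _ rfl
  -- ag is central
  have hcentral : ag ∈ Subgroup.center (GG p m n1 n2 s1 s2) := by
    rw [Subgroup.mem_center_iff]
    intro g
    have hle : (⊤ : Subgroup (GG p m n1 n2 s1 s2)) ≤ Subgroup.centralizer {ag} := by
      rw [← htop]
      apply (Subgroup.closure_le _).mpr
      rintro x (rfl | rfl)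
      · exact Subgroup.mem_centralizer_iff.mpr fun g hg => by
          rw [Set.mem_singleton_iff] at hg; rw [hg]; exact hc1.eq
      · exact Subgroup.mem_centralizer_iff.mpr fun g hg => by
          rw [Set.mem_singleton_iff] at hg; rw [hg]; exact hc2.eq
    exact (Subgroup.mem_centralizer_iff.mp (hle (Subgroup.mem_top g)) ag rfl).symm
  set K := Subgroup.closure ({ag} : Set (GG p m n1 n2 s1 s2)) with hK
  have hKle : K ≤ Subgroup.center (GG p m n1 n2 s1 s2) :=
    (Subgroup.closure_le _).mpr (Set.singleton_subset_iff.mpr hcentral)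
  haveI hKn : K.Normal := by
    constructor
    intro n hn g
    have hcomm := Subgroup.mem_center_iff.mp (hKle hn) g
    rw [hcomm, mul_inv_cancel_right]
    exact hn
  set q := QuotientGroup.mk' K with hq
  have hqtop : Subgroup.closure ({q b1, q b2} : Set (GG p m n1 n2 s1 s2 ⧸ K)) = ⊤ := by
    rw [show ({q b1, q b2} : Set (GG p m n1 n2 s1 s2 ⧸ K)) = q '' {b1, b2} by
      rw [Set.image_insert_eq, Set.image_singleton], ← MonoidHom.map_closure, htop]
    exact Subgroup.map_top_of_surjective q (QuotientGroup.mk'_surjective K)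
  have hqa : q ag = 1 := (QuotientGroup.eq_one_iff ag).mpr (Subgroup.subset_closure rfl)
  have hqc : Commute (q b1) (q b2) := by
    have h' : ⁅(q b2)⁻¹, (q b1)⁻¹⁆ = 1 := by
      rw [← map_inv, ← map_inv, ← map_commutatorElement, ← hag_comm]
      exact hqa
    have := commutatorElement_eq_one_iff_commute.mp h'
    simpa using this.inv_inv.symm
  have hq1 : ∀ x : GG p m n1 n2 s1 s2 ⧸ K, Commute (q b1) x := by
    have hle : (⊤ : Subgroup (GG p m n1 n2 s1 s2 ⧸ K)) ≤ Subgroup.centralizer {q b1} := by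
      rw [← hqtop]
      apply (Subgroup.closure_le _).mpr
      rintro x (rfl | rfl)
      · exact Subgroup.mem_centralizer_iff.mpr fun g hg => by
          rw [Set.mem_singleton_iff] at hg; rw [hg]
      · exact Subgroup.mem_centralizer_iff.mpr fun g hg => by
          rw [Set.mem_singleton_iff] at hg; rw [hg]; exact hqc.eq
    intro x
    exact (Subgroup.mem_centralizer_iff.mp (hle (Subgroup.mem_top x)) (q b1) rfl)
  have hq2 : ∀ x : GG p m n1 n2 s1 s2 ⧸ K, Commute (q b2) x := by
    have hle : (⊤ : Subgroup (GG p m n1 n2 s1 s2 ⧸ K)) ≤ Subgroup.centralizer {q b2} := by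
      rw [← hqtop]
      apply (Subgroup.closure_le _).mpr
      rintro x (rfl | rfl)
      · exact Subgroup.mem_centralizer_iff.mpr fun g hg => by
          rw [Set.mem_singleton_iff] at hg; rw [hg]; exact hqc.symm.eq
      · exact Subgroup.mem_centralizer_iff.mpr fun g hg => by
          rw [Set.mem_singleton_iff] at hg; rw [hg]
    intro x
    exact (Subgroup.mem_centralizer_iff.mp (hle (Subgroup.mem_top x)) (q b2) rfl)
  have hqcomm : ∀ x y : GG p m n1 n2 s1 s2 ⧸ K, Commute x y := by
    intro x y
    have hle : (⊤ : Subgroup (GG p m n1 n2 s1 s2 ⧸ K)) ≤ Subgroup.centralizer {x} := by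
      rw [← hqtop]
      apply (Subgroup.closure_le _).mpr
      rintro s (rfl | rfl)
      · exact Subgroup.mem_centralizer_iff.mpr fun g hg => by
          rw [Set.mem_singleton_iff] at hg; rw [hg]; exact (hq1 x).symm.eq
      · exact Subgroup.mem_centralizer_iff.mpr fun g hg => by
          rw [Set.mem_singleton_iff] at hg; rw [hg]; exact (hq2 x).symm.eq
    exact Subgroup.mem_centralizer_iff.mp (hle (Subgroup.mem_top y)) x rfl
  have heq : commutator (GG p m n1 n2 s1 s2) = K := by
    apply le_antisymm
    · rw [commutator_def]
      refine Subgroup.commutator_le.mpr fun g _ h' _ => ?_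
      have : q ⁅g, h'⁆ = 1 := by
        rw [map_commutatorElement]
        exact commutatorElement_eq_one_iff_commute.mpr (hqcomm _ _)
      exact (QuotientGroup.eq_one_iff _).mp this
    · refine (Subgroup.closure_le _).mpr (Set.singleton_subset_iff.mpr ?_)
      rw [hag_comm, commutator_def]
      exact Subgroup.commutator_mem_commutator (Subgroup.mem_top _) (Subgroup.mem_top _)
  have horder : orderOf ag = p ^ m := by
    refine Nat.dvd_antisymm (orderOf_dvd_of_pow_eq_one hapow) ?_
    have hd := orderOf_map_dvd φ ag
    rw [hφa, orderOf_mk_A p m n1 n2 s1 s2 hp h1 h2] at hd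
    exact hd
  constructor
  · exact heq
  · rw [heq, hK, ← Subgroup.zpowers_eq_closure, Nat.card_zpowers, horder]
end

section
/- Let p be a prime and (m,n1,n2,s1,s2) an admissible tuple for p, and let G = G_p(m,n1,n2,s1,s2). Then G is generated by two elements and has nilpotency class exactly 2 (its commutator subgroup is nontrivial and contained in its center). -/
namespace PGAux

lemma div_carry {N : ℕ} (hN : 0 < N) (a c : ℕ) :
    a / N + (a % N + c) / N = (a + c) / N := by
  conv_rhs => rw [← Nat.mod_add_div a N]
  rw [Nat.add_right_comm, Nat.add_mul_div_left _ _ hN]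
  omega

def carry (N : ℕ) (a b : ZMod N) : ℕ := (a.val + b.val) / N

lemma carry_zero_left (N : ℕ) [NeZero N] (b : ZMod N) : carry N 0 b = 0 := by
  simp [carry, Nat.div_eq_of_lt (ZMod.val_lt b)]

lemma carry_zero_right (N : ℕ) [NeZero N] (a : ZMod N) : carry N a 0 = 0 := by
  simp [carry, Nat.div_eq_of_lt (ZMod.val_lt a)]

lemma carry_neg_one_one (N : ℕ) [Fact (1 < N)] : carry N (-1) 1 = 1 := by
  have hN : 1 < N := Fact.out
  haveI : NeZero N := ⟨by omega⟩
  have h1 : (1 : ZMod N) ≠ 0 := one_ne_zero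
  rw [carry, ZMod.neg_val, if_neg h1, ZMod.val_one]
  have hval : N - 1 + 1 = N := by omega
  rw [hval, Nat.div_self (by omega)]

lemma carry_cocycle (N : ℕ) [NeZero N] (a b c : ZMod N) :
    carry N a b + carry N (a + b) c = carry N b c + carry N a (b + c) := by
  have hN : 0 < N := Nat.pos_of_ne_zero (NeZero.ne N)
  have h1 : carry N a b + carry N (a + b) c = (a.val + b.val + c.val) / N := by
    simp only [carry, ZMod.val_add]
    exact div_carry hN _ _
  have h2 : carry N b c + carry N a (b + c) = (b.val + c.val + a.val) / N := by
    simp only [carry, ZMod.val_add]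
    rw [add_comm a.val]
    exact div_carry hN _ _
  rw [h1, h2]; ring_nf

lemma carry_nat_one (N : ℕ) [NeZero N] [Fact (1 < N)] (t : ℕ) :
    carry N (t : ZMod N) 1 = (t % N + 1) / N := by
  rw [carry, ZMod.val_natCast, ZMod.val_one]

/-- The model group: a central extension of `ZMod (p^n1) × ZMod (p^n2)` by `ZMod (p^m)`
realizing the presentation `G_p(m,n1,n2,s1,s2)`. -/
@[ext]
structure H (p m n1 n2 s1 s2 : ℕ) : Type where
  z : ZMod (p ^ m)
  x : ZMod (p ^ n1)
  y : ZMod (p ^ n2)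

namespace H

variable {p m n1 n2 s1 s2 : ℕ} [NeZero (p ^ n1)] [NeZero (p ^ n2)]
  [Fact (m ≤ n1)] [Fact (m ≤ n2)]

def g1 : ZMod (p ^ n1) →+* ZMod (p ^ m) :=
  ZMod.castHom (pow_dvd_pow p (Fact.out : m ≤ n1)) _

def g2 : ZMod (p ^ n2) →+* ZMod (p ^ m) :=
  ZMod.castHom (pow_dvd_pow p (Fact.out : m ≤ n2)) _

def mul' (u v : H p m n1 n2 s1 s2) : H p m n1 n2 s1 s2 :=
  ⟨u.z + v.z + g2 u.y * g1 v.x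
      + ((p ^ s1 : ℕ) : ZMod (p ^ m)) * ((carry (p ^ n1) u.x v.x : ℕ) : ZMod (p ^ m))
      + ((p ^ s2 : ℕ) : ZMod (p ^ m)) * ((carry (p ^ n2) u.y v.y : ℕ) : ZMod (p ^ m)),
    u.x + v.x, u.y + v.y⟩

def inv' (u : H p m n1 n2 s1 s2) : H p m n1 n2 s1 s2 :=
  ⟨-u.z + g2 u.y * g1 u.x
      - ((p ^ s1 : ℕ) : ZMod (p ^ m)) * ((carry (p ^ n1) (-u.x) u.x : ℕ) : ZMod (p ^ m))
      - ((p ^ s2 : ℕ) : ZMod (p ^ m)) * ((carry (p ^ n2) (-u.y) u.y : ℕ) : ZMod (p ^ m)),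
    -u.x, -u.y⟩

instance : Group (H p m n1 n2 s1 s2) where
  mul := mul'
  one := ⟨0, 0, 0⟩
  inv := inv'
  mul_assoc u v w := by
    have hc1 := congrArg (Nat.cast : ℕ → ZMod (p ^ m)) (carry_cocycle (p ^ n1) u.x v.x w.x)
    have hc2 := congrArg (Nat.cast : ℕ → ZMod (p ^ m)) (carry_cocycle (p ^ n2) u.y v.y w.y)
    push_cast at hc1 hc2
    show mul' (mul' u v) w = mul' u (mul' v w)
    ext
    · simp only [mul', map_add]
      linear_combination ((p ^ s1 : ℕ) : ZMod (p ^ m)) * hc1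
        + ((p ^ s2 : ℕ) : ZMod (p ^ m)) * hc2
    · exact add_assoc _ _ _
    · exact add_assoc _ _ _
  one_mul u := by
    show mul' ⟨0, 0, 0⟩ u = u
    ext <;> simp [mul', carry_zero_left]
  mul_one u := by
    show mul' u ⟨0, 0, 0⟩ = u
    ext <;> simp [mul', carry_zero_right]
  inv_mul_cancel u := by
    show mul' (inv' u) u = ⟨0, 0, 0⟩
    ext <;> simp [mul', inv', map_neg] <;> ring

lemma mul_def (u v : H p m n1 n2 s1 s2) : u * v = mul' u v := rfl
lemma inv_def (u : H p m n1 n2 s1 s2) : u⁻¹ = inv' u := rfl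
lemma one_def : (1 : H p m n1 n2 s1 s2) = ⟨0, 0, 0⟩ := rfl
lemma central_mul (c : ZMod (p ^ m)) (v : H p m n1 n2 s1 s2) :
    (⟨c, 0, 0⟩ : H p m n1 n2 s1 s2) * v = ⟨c + v.z, v.x, v.y⟩ := by
  ext <;> simp [mul_def, mul', carry_zero_left]

lemma mul_central (c : ZMod (p ^ m)) (v : H p m n1 n2 s1 s2) :
    v * (⟨c, 0, 0⟩ : H p m n1 n2 s1 s2) = ⟨v.z + c, v.x, v.y⟩ := by
  ext <;> simp [mul_def, mul', carry_zero_right]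

lemma central_comm (c : ZMod (p ^ m)) (v : H p m n1 n2 s1 s2) :
    Commute (⟨c, 0, 0⟩ : H p m n1 n2 s1 s2) v := by
  show _ * _ = _ * _
  rw [central_mul, mul_central, add_comm]

lemma central_pow (c : ZMod (p ^ m)) (t : ℕ) :
    (⟨c, 0, 0⟩ : H p m n1 n2 s1 s2) ^ t = ⟨(t : ZMod (p ^ m)) * c, 0, 0⟩ := by
  induction t with
  | zero => ext <;> simp [one_def]
  | succ t ih =>
      rw [pow_succ, ih, mul_central]
      ext <;> first | rfl | (push_cast; ring)

lemma B1_pow [Fact (1 < p ^ n1)] (t : ℕ) :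
    (⟨0, 1, 0⟩ : H p m n1 n2 s1 s2) ^ t
      = ⟨((p ^ s1 : ℕ) : ZMod (p ^ m)) * ((t / p ^ n1 : ℕ) : ZMod (p ^ m)),
          (t : ZMod (p ^ n1)), 0⟩ := by
  induction t with
  | zero => ext <;> simp [one_def]
  | succ t ih =>
      rw [pow_succ, ih]
      have key := congrArg (Nat.cast : ℕ → ZMod (p ^ m))
        (div_carry (Nat.pos_of_ne_zero (NeZero.ne (p ^ n1))) t 1)
      rw [Nat.cast_add] at key
      ext
      · simp only [mul_def, mul', carry_nat_one, carry_zero_right, carry_zero_left,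
          map_zero, map_one, Nat.cast_zero, mul_zero, zero_mul, add_zero, mul_one]
        linear_combination ((p ^ s1 : ℕ) : ZMod (p ^ m)) * key
      · simp [mul_def, mul']
      · simp [mul_def, mul']

lemma B2_pow [Fact (1 < p ^ n2)] (t : ℕ) :
    (⟨0, 0, 1⟩ : H p m n1 n2 s1 s2) ^ t
      = ⟨((p ^ s2 : ℕ) : ZMod (p ^ m)) * ((t / p ^ n2 : ℕ) : ZMod (p ^ m)),
          0, (t : ZMod (p ^ n2))⟩ := by
  induction t with
  | zero => ext <;> simp [one_def]
  | succ t ih =>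
      rw [pow_succ, ih]
      have key := congrArg (Nat.cast : ℕ → ZMod (p ^ m))
        (div_carry (Nat.pos_of_ne_zero (NeZero.ne (p ^ n2))) t 1)
      rw [Nat.cast_add] at key
      ext
      · simp only [mul_def, mul', carry_nat_one, carry_zero_right, carry_zero_left,
          map_zero, map_one, Nat.cast_zero, mul_zero, zero_mul, add_zero, mul_one]
        linear_combination ((p ^ s2 : ℕ) : ZMod (p ^ m)) * key
      · simp [mul_def, mul']
      · simp [mul_def, mul']

lemma A_eq [Fact (1 < p ^ n1)] [Fact (1 < p ^ n2)] :
    (⟨0, 0, 1⟩ : H p m n1 n2 s1 s2)⁻¹ * (⟨0, 1, 0⟩ : H p m n1 n2 s1 s2)⁻¹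
      * ⟨0, 0, 1⟩ * ⟨0, 1, 0⟩ = ⟨1, 0, 0⟩ := by
  ext <;>
    simp [mul_def, inv_def, mul', inv', carry_zero_left, carry_zero_right,
      carry_neg_one_one, map_neg] <;> ring

end H

/-- In any group, if `a` commutes with `v`, the corresponding commutator word is trivial. -/
lemma conj_comm_eq_one {G : Type*} [Group G] {a v : G} (h : Commute a v) :
    v⁻¹ * a⁻¹ * v * a = 1 := by
  have h1 : a⁻¹ * v = v * a⁻¹ := h.inv_left.eq
  rw [mul_assoc v⁻¹ a⁻¹ v, h1, ← mul_assoc v⁻¹ v, inv_mul_cancel, one_mul, inv_mul_cancel]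

/-- The five relators of `G_p(m,n1,n2,s1,s2)` hold in the model group `H p m n1 n2 s1 s2`. -/
lemma lift_rels (p m n1 n2 s1 s2 : ℕ) [NeZero (p ^ n1)] [NeZero (p ^ n2)]
    [Fact (m ≤ n1)] [Fact (m ≤ n2)] [Fact (1 < p ^ n1)] [Fact (1 < p ^ n2)] :
    ∀ r ∈ pgRels p m n1 n2 s1 s2,
      FreeGroup.lift (![(⟨0, 1, 0⟩ : H p m n1 n2 s1 s2), ⟨0, 0, 1⟩]) r = 1 := by
  intro r hr
  have hpow1 : (⟨0, 1, 0⟩ : H p m n1 n2 s1 s2) ^ p ^ n1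
      = ⟨((p ^ s1 : ℕ) : ZMod (p ^ m)), 0, 0⟩ := by
    rw [H.B1_pow]
    ext
    · rw [Nat.div_self (Nat.pos_of_ne_zero (NeZero.ne (p ^ n1))), Nat.cast_one, mul_one]
    · exact ZMod.natCast_self _
    · rfl
  have hpow2 : (⟨0, 0, 1⟩ : H p m n1 n2 s1 s2) ^ p ^ n2
      = ⟨((p ^ s2 : ℕ) : ZMod (p ^ m)), 0, 0⟩ := by
    rw [H.B2_pow]
    ext
    · rw [Nat.div_self (Nat.pos_of_ne_zero (NeZero.ne (p ^ n2))), Nat.cast_one, mul_one]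
    · rfl
    · exact ZMod.natCast_self _
  simp only [pgRels, Set.mem_insert_iff, Set.mem_singleton_iff] at hr
  rcases hr with rfl | rfl | rfl | rfl | rfl
  · -- a ^ p^m = 1
    simp only [map_pow, map_mul, map_inv, FreeGroup.lift_apply_of, Matrix.cons_val_zero,
      Matrix.cons_val_one, Matrix.head_cons]
    rw [H.A_eq, H.central_pow]
    ext <;> simp [H.one_def, ZMod.natCast_self]
  · -- [b1, a] = 1
    simp only [map_mul, map_inv, FreeGroup.lift_apply_of, Matrix.cons_val_zero,
      Matrix.cons_val_one, Matrix.head_cons]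
    rw [H.A_eq]
    exact conj_comm_eq_one (H.central_comm 1 _)
  · -- [b2, a] = 1
    simp only [map_mul, map_inv, FreeGroup.lift_apply_of, Matrix.cons_val_zero,
      Matrix.cons_val_one, Matrix.head_cons]
    rw [H.A_eq]
    exact conj_comm_eq_one (H.central_comm 1 _)
  · -- b1 ^ p^n1 = a ^ p^s1
    simp only [map_mul, map_inv, map_pow, FreeGroup.lift_apply_of, Matrix.cons_val_zero,
      Matrix.cons_val_one, Matrix.head_cons]
    rw [H.A_eq, H.central_pow, hpow1]
    have he : (⟨(((p ^ s1 : ℕ)) : ZMod (p ^ m)), 0, 0⟩ : H p m n1 n2 s1 s2)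
        = ⟨((p ^ s1 : ℕ) : ZMod (p ^ m)) * 1, 0, 0⟩ := by rw [mul_one]
    rw [he]
    have hc : ((p ^ s1 : ℕ) : ZMod (p ^ m)) * 1
        = ((p ^ s1 : ℕ) : ZMod (p ^ m)) * 1 := rfl
    exact mul_inv_cancel _
  · -- b2 ^ p^n2 = a ^ p^s2
    simp only [map_mul, map_inv, map_pow, FreeGroup.lift_apply_of, Matrix.cons_val_zero,
      Matrix.cons_val_one, Matrix.head_cons]
    rw [H.A_eq, H.central_pow, hpow2]
    have he : (⟨(((p ^ s2 : ℕ)) : ZMod (p ^ m)), 0, 0⟩ : H p m n1 n2 s1 s2)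
        = ⟨((p ^ s2 : ℕ) : ZMod (p ^ m)) * 1, 0, 0⟩ := by rw [mul_one]
    rw [he]
    exact mul_inv_cancel _

/-- If a group is generated by `{a, b}` and `c` commutes with both `a` and `b`, then `c`
commutes with everything. -/
lemma commute_of_closure_pair {G : Type*} [Group G] {a b c : G}
    (h : Subgroup.closure {a, b} = ⊤) (ha : Commute c a) (hb : Commute c b) (g : G) :
    Commute c g := by
  have hg : g ∈ Subgroup.closure {a, b} := by rw [h]; exact Subgroup.mem_top g
  induction hg using Subgroup.closure_induction with
  | mem x hx =>
      rcases hx with rfl | hx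
      · exact ha
      · rw [Set.mem_singleton_iff] at hx; subst hx; exact hb
  | one => exact Commute.one_right c
  | mul x y hx hy ihx ihy => exact ihx.mul_right ihy
  | inv x hx ih => exact ih.inv_right

end PGAux

open scoped commutatorElement

/-- For an admissible tuple, `G_p(m,n1,n2,s1,s2)` is generated by two elements and has
nilpotency class exactly 2: its commutator subgroup is nontrivial and central. -/
theorem presented_group_two_generated_class_two
    (p : ℕ) (hp : p.Prime) (m n1 n2 s1 s2 : ℕ) (h : Admissible p m n1 n2 s1 s2) :
    (∃ a b : GG p m n1 n2 s1 s2, Subgroup.closure {a, b} = ⊤) ∧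
    commutator (GG p m n1 n2 s1 s2) ≠ ⊥ ∧
    commutator (GG p m n1 n2 s1 s2) ≤ Subgroup.center (GG p m n1 n2 s1 s2) := by
  obtain ⟨⟨hm, hs1, hs2, hmn2, hn21⟩, -, -, -⟩ := h
  haveI : NeZero (p ^ n1) := ⟨pow_ne_zero _ hp.ne_zero⟩
  haveI : NeZero (p ^ n2) := ⟨pow_ne_zero _ hp.ne_zero⟩
  haveI : Fact (m ≤ n1) := ⟨le_trans hmn2 hn21⟩
  haveI : Fact (m ≤ n2) := ⟨hmn2⟩
  haveI : Fact (1 < p ^ n1) := ⟨Nat.one_lt_pow (by omega) hp.one_lt⟩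
  haveI : Fact (1 < p ^ n2) := ⟨Nat.one_lt_pow (by omega) hp.one_lt⟩
  haveI : Fact (1 < p ^ m) := ⟨Nat.one_lt_pow (by omega) hp.one_lt⟩
  set b1 : GG p m n1 n2 s1 s2 := PresentedGroup.of 0 with hb1
  set b2 : GG p m n1 n2 s1 s2 := PresentedGroup.of 1 with hb2
  have hgen : Subgroup.closure {b1, b2} = ⊤ := by
    apply le_antisymm le_top
    rw [← PresentedGroup.closure_range_of (pgRels p m n1 n2 s1 s2)]
    apply Subgroup.closure_mono
    rintro - ⟨i, rfl⟩
    fin_cases i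
    · exact Set.mem_insert _ _
    · exact Set.mem_insert_of_mem _ rfl
  have hrel1 : ∀ r ∈ pgRels p m n1 n2 s1 s2,
      PresentedGroup.mk (pgRels p m n1 n2 s1 s2) r = 1 := fun r hr =>
    (QuotientGroup.eq_one_iff r).mpr (Subgroup.subset_normalClosure hr)
  set aG : GG p m n1 n2 s1 s2 := b2⁻¹ * b1⁻¹ * b2 * b1 with haG
  have hcomm1 : Commute aG b1 := by
    have h0 : b1⁻¹ * aG⁻¹ * b1 * aG = 1 := by
      have h' := hrel1 _ (Set.mem_insert_of_mem _ (Set.mem_insert _ _))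
      simp only [map_mul, map_inv] at h'
      exact h'
    have h1 : ⁅b1⁻¹, aG⁻¹⁆ = 1 := by
      rw [commutatorElement_def, inv_inv, inv_inv]
      exact h0
    have h3 := (commutatorElement_eq_one_iff_commute.mp h1).symm
    rwa [Commute.inv_left_iff, Commute.inv_right_iff] at h3
  have hcomm2 : Commute aG b2 := by
    have h0 : b2⁻¹ * aG⁻¹ * b2 * aG = 1 := by
      have h' := hrel1 _
        (Set.mem_insert_of_mem _ (Set.mem_insert_of_mem _ (Set.mem_insert _ _)))
      simp only [map_mul, map_inv] at h'
      exact h'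
    have h1 : ⁅b2⁻¹, aG⁻¹⁆ = 1 := by
      rw [commutatorElement_def, inv_inv, inv_inv]
      exact h0
    have h3 := (commutatorElement_eq_one_iff_commute.mp h1).symm
    rwa [Commute.inv_left_iff, Commute.inv_right_iff] at h3
  have hcenter : aG ∈ Subgroup.center (GG p m n1 n2 s1 s2) :=
    Subgroup.mem_center_iff.mpr fun g =>
      (PGAux.commute_of_closure_pair hgen hcomm1 hcomm2 g).symm.eq
  have ha_ne : aG ≠ 1 := by
    intro he
    have h1 : PresentedGroup.toGroup (PGAux.lift_rels p m n1 n2 s1 s2) aG = ⟨1, 0, 0⟩ := by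
      rw [haG, hb1, hb2, map_mul, map_mul, map_mul, map_inv, map_inv,
        PresentedGroup.toGroup.of, PresentedGroup.toGroup.of]
      simp only [Matrix.cons_val_zero, Matrix.cons_val_one, Matrix.head_cons]
      exact PGAux.H.A_eq
    rw [he, map_one] at h1
    have h2 : (0 : ZMod (p ^ m)) = 1 := congrArg PGAux.H.z h1
    exact zero_ne_one h2
  have hamem : aG ∈ commutator (GG p m n1 n2 s1 s2) := by
    have he : aG = ⁅b2⁻¹, b1⁻¹⁆ := by
      rw [commutatorElement_def, inv_inv, inv_inv]
    rw [he, commutator_def]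
    exact Subgroup.commutator_mem_commutator (Subgroup.mem_top _) (Subgroup.mem_top _)
  refine ⟨⟨b1, b2, hgen⟩, ?_, ?_⟩
  · intro hbot
    rw [hbot, Subgroup.mem_bot] at hamem
    exact ha_ne hamem
  · set Z := Subgroup.center (GG p m n1 n2 s1 s2) with hZ
    have hsur : Function.Surjective (QuotientGroup.mk' Z) := QuotientGroup.mk'_surjective Z
    have hgenQ : Subgroup.closure {QuotientGroup.mk' Z b1, QuotientGroup.mk' Z b2} = ⊤ := by
      rw [← Set.image_pair, ← MonoidHom.map_closure, hgen]
      exact Subgroup.map_top_of_surjective _ hsur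
    have hcommQ : Commute (QuotientGroup.mk' Z b1) (QuotientGroup.mk' Z b2) := by
      show QuotientGroup.mk' Z b1 * QuotientGroup.mk' Z b2
          = QuotientGroup.mk' Z b2 * QuotientGroup.mk' Z b1
      rw [← map_mul, ← map_mul, QuotientGroup.mk'_apply, QuotientGroup.mk'_apply,
        QuotientGroup.eq]
      have he : (b1 * b2)⁻¹ * (b2 * b1) = aG := by rw [haG]; group
      rw [he]
      exact hcenter
    rw [commutator_def]
    refine Subgroup.commutator_le.mpr fun g _ g' _ => ?_
    have hA : ∀ q, Commute (QuotientGroup.mk' Z b1) q := fun q =>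
      PGAux.commute_of_closure_pair hgenQ (Commute.refl _) hcommQ q
    have hB : ∀ q, Commute (QuotientGroup.mk' Z b2) q := fun q =>
      PGAux.commute_of_closure_pair hgenQ hcommQ.symm (Commute.refl _) q
    have hcq : Commute (QuotientGroup.mk' Z g) (QuotientGroup.mk' Z g') :=
      PGAux.commute_of_closure_pair hgenQ (hA _).symm (hB _).symm _
    have h1 : QuotientGroup.mk' Z ⁅g, g'⁆ = 1 := by
      rw [map_commutatorElement]
      exact commutatorElement_eq_one_iff_commute.mpr hcq
    rwa [← QuotientGroup.ker_mk' Z, MonoidHom.mem_ker]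
end

section
/- Let p be a prime and let G be a finite p-group of nilpotency class at most 2. Then M_1(G) = G; for every natural number k and every n with p^k < n ≤ 2p^k, the n-th dimension subgroup M_n(G) equals the subgroup generated by the p^k-th powers of elements of G' together with the p^(k+1)-st powers of elements of G; and for every n with 2p^k < n ≤ p^(k+1), M_n(G) equals the subgroup generated by the p^(k+1)-st powers of elements of G. -/
/-- `subgroupPow H u` is the subgroup generated by the `u`-th powers of elements of `H`. -/
def subgroupPow {G : Type*} [Group G] (H : Subgroup G) (u : ℕ) : Subgroup G :=
  Subgroup.closure {x : G | ∃ h ∈ H, x = h ^ u}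

/-- The `n`-th dimension subgroup `M_n(G) = ∏_{i·p^j ≥ n, i ≥ 1} γ_i(G)^(p^j)`, where
`γ_i(G)` is the `i`-th term of the lower central series (`γ_1(G) = G`). -/
def dimensionSubgroup (p : ℕ) (G : Type*) [Group G] (n : ℕ) : Subgroup G :=
  ⨆ (i : ℕ) (j : ℕ) (_ : 1 ≤ i ∧ n ≤ i * p ^ j),
    subgroupPow ((⊤ : Subgroup G).lowerCentralSeries (i - 1)) (p ^ j)

section Aux

variable {G : Type*} [Group G]

lemma subgroupPow_mono {H K : Subgroup G} (h : H ≤ K) (u : ℕ) :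
    subgroupPow H u ≤ subgroupPow K u :=
  Subgroup.closure_mono (by rintro x ⟨a, ha, rfl⟩; exact ⟨a, h ha, rfl⟩)

lemma subgroupPow_le_self (H : Subgroup G) (u : ℕ) : subgroupPow H u ≤ H := by
  rw [subgroupPow, Subgroup.closure_le]
  rintro x ⟨a, ha, rfl⟩
  exact H.pow_mem ha u

lemma subgroupPow_mul_le (H : Subgroup G) (u v : ℕ) :
    subgroupPow H (u * v) ≤ subgroupPow H v := by
  rw [subgroupPow, Subgroup.closure_le]
  rintro x ⟨a, ha, rfl⟩
  rw [pow_mul]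
  exact Subgroup.subset_closure ⟨a ^ u, H.pow_mem ha u, rfl⟩

lemma subgroupPow_pow_le (H : Subgroup G) {p j k : ℕ} (h : k ≤ j) :
    subgroupPow H (p ^ j) ≤ subgroupPow H (p ^ k) := by
  have : p ^ j = p ^ (j - k) * p ^ k := by rw [← pow_add]; congr 1; omega
  rw [this]
  exact subgroupPow_mul_le H _ _

lemma subgroupPow_one_top : subgroupPow (⊤ : Subgroup G) 1 = ⊤ := by
  rw [eq_top_iff]
  intro x _
  exact Subgroup.subset_closure ⟨x, trivial, (pow_one x).symm⟩

lemma lcs_two_eq_bot (hclass : commutator G ≤ Subgroup.center G) :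
    (⊤ : Subgroup G).lowerCentralSeries 2 = ⊥ := by
  rw [eq_bot_iff, Subgroup.lowerCentralSeries_succ, Subgroup.commutator_def, Subgroup.closure_le]
  rintro x ⟨a, ha, b, -, rfl⟩
  have hc : a ∈ Subgroup.center G := hclass (by rwa [← Subgroup.top_lowerCentralSeries_one])
  have : a * b = b * a := (Subgroup.mem_center_iff.mp hc b).symm
  simp only [SetLike.mem_coe, Subgroup.mem_bot, commutatorElement_def]
  rw [this]; group

lemma le_dimensionSubgroup (p n i j : ℕ) (h : 1 ≤ i ∧ n ≤ i * p ^ j) :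
    subgroupPow ((⊤ : Subgroup G).lowerCentralSeries (i - 1)) (p ^ j) ≤ dimensionSubgroup p G n :=
  le_iSup_of_le i <| le_iSup_of_le j <| le_iSup_of_le h le_rfl

end Aux

/-- For a finite `p`-group `G` of nilpotency class at most 2:
`M_1(G) = G`; for `p^k < n ≤ 2p^k`, `M_n(G) = (G')^(p^k) · G^(p^(k+1))`; and for
`2p^k < n ≤ p^(k+1)`, `M_n(G) = G^(p^(k+1))`. -/
theorem dimension_subgroups_of_class_two_group
    (p : ℕ) (hp : p.Prime) (G : Type*) [Group G] [Finite G] (hGp : IsPGroup p G)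
    (hclass : commutator G ≤ Subgroup.center G) :
    dimensionSubgroup p G 1 = ⊤ ∧
    (∀ k n : ℕ, p ^ k < n → n ≤ 2 * p ^ k →
      dimensionSubgroup p G n =
        subgroupPow (commutator G) (p ^ k) ⊔ subgroupPow ⊤ (p ^ (k + 1))) ∧
    (∀ k n : ℕ, 2 * p ^ k < n → n ≤ p ^ (k + 1) →
      dimensionSubgroup p G n = subgroupPow ⊤ (p ^ (k + 1))) := by
  have hp2 : 2 ≤ p := hp.two_le
  have hbot : ∀ i : ℕ, 3 ≤ i → ∀ u, subgroupPow ((⊤ : Subgroup G).lowerCentralSeries (i - 1)) u ≤ ⊥ := by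
    intro i hi u
    have h1 : (⊤ : Subgroup G).lowerCentralSeries (i - 1) ≤ (⊤ : Subgroup G).lowerCentralSeries 2 :=
      Subgroup.lowerCentralSeries_antitone ⊤ (by omega)
    rw [lcs_two_eq_bot hclass] at h1
    exact (subgroupPow_le_self _ u).trans h1
  refine ⟨?_, ?_, ?_⟩
  · rw [eq_top_iff, ← subgroupPow_one_top (G := G)]
    have := le_dimensionSubgroup (G := G) p 1 1 0 ⟨le_rfl, by simp⟩
    simpa using this
  · intro k n hn1 hn2
    apply le_antisymm
    · refine iSup_le fun i => iSup_le fun j => iSup_le fun ⟨hi, hij⟩ => ?_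
      rcases lt_or_ge i 3 with h3 | h3
      · interval_cases i
        · -- i = 1
          have hj : k + 1 ≤ j := by
            by_contra h
            have : p ^ j ≤ p ^ k := Nat.pow_le_pow_right (by omega) (by omega)
            omega
          refine le_sup_of_le_right ?_
          rw [show (1:ℕ) - 1 = 0 from rfl, Subgroup.lowerCentralSeries_zero]
          exact subgroupPow_pow_le _ hj
        · -- i = 2
          have hj : k ≤ j := by
            by_contra h
            have h1 : p ^ (j + 1) ≤ p ^ k := Nat.pow_le_pow_right (by omega) (by omega)
            have h2 : 2 * p ^ j ≤ p * p ^ j := Nat.mul_le_mul_right _ hp2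
            rw [← pow_succ'] at h2
            omega
          refine le_sup_of_le_left ?_
          rw [show (2:ℕ) - 1 = 1 from rfl, Subgroup.top_lowerCentralSeries_one]
          exact subgroupPow_pow_le _ hj
      · exact (hbot i h3 _).trans bot_le
    · refine sup_le ?_ ?_
      · have := le_dimensionSubgroup (G := G) p n 2 k ⟨by omega, by omega⟩
        rwa [show (2:ℕ) - 1 = 1 from rfl, Subgroup.top_lowerCentralSeries_one] at this
      · have hle : n ≤ 1 * p ^ (k + 1) := by
          have : 2 * p ^ k ≤ p * p ^ k := Nat.mul_le_mul_right _ hp2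
          rw [← pow_succ'] at this
          omega
        have := le_dimensionSubgroup (G := G) p n 1 (k + 1) ⟨le_rfl, hle⟩
        rwa [show (1:ℕ) - 1 = 0 from rfl, Subgroup.lowerCentralSeries_zero] at this
  · intro k n hn1 hn2
    apply le_antisymm
    · refine iSup_le fun i => iSup_le fun j => iSup_le fun ⟨hi, hij⟩ => ?_
      rcases lt_or_ge i 3 with h3 | h3
      · interval_cases i
        · -- i = 1
          have hj : k + 1 ≤ j := by
            by_contra h
            have h1 : p ^ j ≤ p ^ k := Nat.pow_le_pow_right (by omega) (by omega)
            omega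
          rw [show (1:ℕ) - 1 = 0 from rfl, Subgroup.lowerCentralSeries_zero]
          exact subgroupPow_pow_le _ hj
        · -- i = 2
          have hj : k + 1 ≤ j := by
            by_contra h
            have h1 : p ^ j ≤ p ^ k := Nat.pow_le_pow_right (by omega) (by omega)
            omega
          rw [show (2:ℕ) - 1 = 1 from rfl, Subgroup.top_lowerCentralSeries_one]
          exact ((subgroupPow_pow_le _ hj).trans (subgroupPow_mono le_top _))
      · exact (hbot i h3 _).trans bot_le
    · have := le_dimensionSubgroup (G := G) p n 1 (k + 1) ⟨le_rfl, by omega⟩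
      rwa [show (1:ℕ) - 1 = 0 from rfl, Subgroup.lowerCentralSeries_zero] at this
end

section
/- Let p be an odd prime and (m,n1,n2,s1,s2) an admissible tuple for p, and let G = G_p(m,n1,n2,s1,s2) with generators b1, b2 and a = [b2,b1]. Then s2 is the least natural number i such that a^(p^i) belongs to the subgroup of G generated by a^(p^(i+1)), b1^(p^(i+1)) and b2^(p^(i+1)). -/
/-! ### A Heisenberg-type model group -/

/-- Heisenberg group over a commutative ring `R`: triples with twisted multiplication. -/
@[ext]
structure Hei (R : Type) [CommRing R] where
  x : R
  y : R
  z : R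

namespace Hei

variable {R : Type} [CommRing R]

instance : Mul (Hei R) := ⟨fun g h => ⟨g.x + h.x, g.y + h.y, g.z + h.z + h.x * g.y⟩⟩
instance : One (Hei R) := ⟨⟨0, 0, 0⟩⟩
instance : Inv (Hei R) := ⟨fun g => ⟨-g.x, -g.y, -g.z + g.x * g.y⟩⟩

@[simp] lemma mul_x (g h : Hei R) : (g * h).x = g.x + h.x := rfl
@[simp] lemma mul_y (g h : Hei R) : (g * h).y = g.y + h.y := rfl
@[simp] lemma mul_z (g h : Hei R) : (g * h).z = g.z + h.z + h.x * g.y := rfl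
@[simp] lemma one_x : (1 : Hei R).x = 0 := rfl
@[simp] lemma one_y : (1 : Hei R).y = 0 := rfl
@[simp] lemma one_z : (1 : Hei R).z = 0 := rfl
@[simp] lemma inv_x (g : Hei R) : (g⁻¹).x = -g.x := rfl
@[simp] lemma inv_y (g : Hei R) : (g⁻¹).y = -g.y := rfl
@[simp] lemma inv_z (g : Hei R) : (g⁻¹).z = -g.z + g.x * g.y := rfl

instance : Group (Hei R) where
  mul_assoc a b c := by ext <;> simp <;> ring
  one_mul a := by ext <;> simp
  mul_one a := by ext <;> simp
  inv_mul_cancel a := by ext <;> simp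

lemma X_pow (r : R) (n : ℕ) : (⟨r, 0, 0⟩ : Hei R) ^ n = ⟨n * r, 0, 0⟩ := by
  induction n with
  | zero => ext <;> simp
  | succ k ih => rw [pow_succ, ih]; ext <;> simp <;> ring

lemma Y_pow (r : R) (n : ℕ) : (⟨0, r, 0⟩ : Hei R) ^ n = ⟨0, n * r, 0⟩ := by
  induction n with
  | zero => ext <;> simp
  | succ k ih => rw [pow_succ, ih]; ext <;> simp <;> ring

lemma Z_pow (r : R) (n : ℕ) : (⟨0, 0, r⟩ : Hei R) ^ n = ⟨0, 0, n * r⟩ := by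
  induction n with
  | zero => ext <;> simp
  | succ k ih => rw [pow_succ, ih]; ext <;> simp <;> ring

lemma comm_val :
    ((⟨0, 1, 0⟩ : Hei R)⁻¹ * (⟨1, 0, 0⟩ : Hei R)⁻¹ * ⟨0, 1, 0⟩ * ⟨1, 0, 0⟩ : Hei R)
      = ⟨0, 0, 1⟩ := by
  ext <;> simp

/-- The subgroup of elements whose coordinates all lie in an ideal `I`. -/
def sgr (I : Ideal R) : Subgroup (Hei R) where
  carrier := {g | g.x ∈ I ∧ g.y ∈ I ∧ g.z ∈ I}
  one_mem' := by simp
  mul_mem' := by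
    rintro g h ⟨hx, hy, hz⟩ ⟨hx', hy', hz'⟩
    exact ⟨I.add_mem hx hx', I.add_mem hy hy',
      I.add_mem (I.add_mem hz hz') (I.mul_mem_left _ hy)⟩
  inv_mem' := by
    rintro g ⟨hx, hy, hz⟩
    exact ⟨I.neg_mem hx, I.neg_mem hy, I.add_mem (I.neg_mem hz) (I.mul_mem_left _ hy)⟩

lemma mem_sgr {I : Ideal R} {g : Hei R} :
    g ∈ sgr I ↔ g.x ∈ I ∧ g.y ∈ I ∧ g.z ∈ I := Iff.rfl

end Hei

/-- Every relator maps to `1` in the presented group. -/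
lemma pg_rel_one {α : Type*} {rels : Set (FreeGroup α)} {r : FreeGroup α} (hr : r ∈ rels) :
    PresentedGroup.mk rels r = 1 :=
  (QuotientGroup.eq_one_iff r).mpr (Subgroup.subset_normalClosure hr)

/-- For an odd prime `p` and an admissible tuple, in `G = G_p(m,n1,n2,s1,s2)` with
`a = [b2,b1]`, the parameter `s2` is the least natural number `i` such that
`a^(p^i)` lies in the subgroup generated by `a^(p^(i+1))`, `b1^(p^(i+1))`, `b2^(p^(i+1))`. -/
theorem s2_least_odd_prime
    (p : ℕ) (hp : p.Prime) (hodd : p ≠ 2) (m n1 n2 s1 s2 : ℕ)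
    (h : Admissible p m n1 n2 s1 s2) :
    let b1 : GG p m n1 n2 s1 s2 := PresentedGroup.of 0
    let b2 : GG p m n1 n2 s1 s2 := PresentedGroup.of 1
    let a : GG p m n1 n2 s1 s2 := b2⁻¹ * b1⁻¹ * b2 * b1
    IsLeast {i : ℕ |
      a ^ p ^ i ∈ Subgroup.closure {a ^ p ^ (i + 1), b1 ^ p ^ (i + 1), b2 ^ p ^ (i + 1)}} s2 := by
  intro b1 b2 a
  obtain ⟨⟨hm, hs1m, hs2m, hmn2, hn2n1⟩, hA2, _, hA4⟩ := h
  have hs2s1 : s2 ≤ s1 := hA4.resolve_right (fun h' => hodd h'.1)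
  have hs2n2 : s2 ≤ n2 := hs2m.trans hmn2
  have hs2n1 : s2 ≤ n1 := hs2n2.trans hn2n1
  have hmkb1 : PresentedGroup.mk (pgRels p m n1 n2 s1 s2) (FreeGroup.of 0) = b1 := rfl
  have hmkb2 : PresentedGroup.mk (pgRels p m n1 n2 s1 s2) (FreeGroup.of 1) = b2 := rfl
  have hmka : PresentedGroup.mk (pgRels p m n1 n2 s1 s2)
      ((FreeGroup.of 1)⁻¹ * (FreeGroup.of 0)⁻¹ * FreeGroup.of 1 * FreeGroup.of 0) = a := by
    simp only [map_mul, map_inv, hmkb1, hmkb2]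
    rfl
  -- the two relations we need in `G`
  have hrelm : a ^ p ^ m = 1 := by
    have := pg_rel_one (rels := pgRels p m n1 n2 s1 s2)
      (r := ((FreeGroup.of 1)⁻¹ * (FreeGroup.of 0)⁻¹ * FreeGroup.of 1 * FreeGroup.of 0) ^ p ^ m)
      (by simp [pgRels])
    rwa [map_pow, hmka] at this
  have hrel2 : b2 ^ p ^ n2 = a ^ p ^ s2 := by
    have := pg_rel_one (rels := pgRels p m n1 n2 s1 s2)
      (r := (FreeGroup.of 1) ^ p ^ n2 *
        (((FreeGroup.of 1)⁻¹ * (FreeGroup.of 0)⁻¹ * FreeGroup.of 1 * FreeGroup.of 0) ^ p ^ s2)⁻¹)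
      (by simp [pgRels])
    rw [map_mul, map_inv, map_pow, map_pow, hmka, hmkb2] at this
    exact mul_inv_eq_one.mp this
  constructor
  · -- membership: `a ^ p ^ s2` lies in the subgroup
    show a ^ p ^ s2 ∈
      Subgroup.closure {a ^ p ^ (s2 + 1), b1 ^ p ^ (s2 + 1), b2 ^ p ^ (s2 + 1)}
    rcases eq_or_lt_of_le hs2n2 with heq | hlt
    · -- s2 = n2, hence s2 = m and a ^ p ^ s2 = 1
      have hs2m' : s2 = m := le_antisymm hs2m (by omega)
      have h1 : a ^ p ^ s2 = 1 := by
        have hpe : p ^ s2 = p ^ m := by rw [hs2m']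
        rw [hpe]; exact hrelm
      rw [h1]
      exact one_mem _
    · have hpow : b2 ^ p ^ n2 = (b2 ^ p ^ (s2 + 1)) ^ p ^ (n2 - (s2 + 1)) := by
        rw [← pow_mul, ← pow_add, Nat.add_sub_cancel' hlt]
      rw [← hrel2, hpow]
      exact pow_mem (Subgroup.subset_closure (by simp)) _
  · -- lower bound
    intro i hi
    simp only [Set.mem_setOf_eq] at hi
    by_contra hlt
    push_neg at hlt
    have hi1 : i + 1 ≤ s2 := hlt
    -- the model group
    set R := ZMod (p ^ s2) with hR
    have hcast : ∀ k : ℕ, s2 ≤ k → ((p ^ k : ℕ) : R) = 0 := fun k hk =>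
      (ZMod.natCast_eq_zero_iff _ _).mpr (pow_dvd_pow p hk)
    set f : Fin 2 → Hei R := ![⟨1, 0, 0⟩, ⟨0, 1, 0⟩] with hf
    have hL1 : FreeGroup.lift f (FreeGroup.of 0) = (⟨1, 0, 0⟩ : Hei R) := by
      rw [FreeGroup.lift_apply_of]; simp [hf]
    have hL2 : FreeGroup.lift f (FreeGroup.of 1) = (⟨0, 1, 0⟩ : Hei R) := by
      rw [FreeGroup.lift_apply_of]; simp [hf]
    have hLA : FreeGroup.lift f
        ((FreeGroup.of 1)⁻¹ * (FreeGroup.of 0)⁻¹ * FreeGroup.of 1 * FreeGroup.of 0)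
        = (⟨0, 0, 1⟩ : Hei R) := by
      rw [map_mul, map_mul, map_mul, map_inv, map_inv, hL1, hL2, Hei.comm_val]
    have hrels : ∀ r ∈ pgRels p m n1 n2 s1 s2, FreeGroup.lift f r = 1 := by
      intro r hr
      simp only [pgRels, Set.mem_insert_iff, Set.mem_singleton_iff] at hr
      rcases hr with rfl | rfl | rfl | rfl | rfl
      · rw [map_pow, hLA, Hei.Z_pow, hcast m hs2m]
        ext <;> simp
      · rw [map_mul, map_mul, map_mul, map_inv, map_inv, hLA, hL1]
        ext <;> simp
      · rw [map_mul, map_mul, map_mul, map_inv, map_inv, hLA, hL2]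
        ext <;> simp
      · rw [map_mul, map_inv, map_pow, map_pow, hLA, hL1, Hei.X_pow, Hei.Z_pow,
          hcast n1 hs2n1, hcast s1 hs2s1]
        ext <;> simp
      · rw [map_mul, map_inv, map_pow, map_pow, hLA, hL2, Hei.Y_pow, Hei.Z_pow,
          hcast n2 hs2n2, hcast s2 le_rfl]
        ext <;> simp
    set φ : GG p m n1 n2 s1 s2 →* Hei R := PresentedGroup.toGroup hrels with hφ
    have hφb1 : φ b1 = (⟨1, 0, 0⟩ : Hei R) := by
      show φ (PresentedGroup.of 0) = _
      rw [hφ, PresentedGroup.toGroup.of]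
      simp [hf]
    have hφb2 : φ b2 = (⟨0, 1, 0⟩ : Hei R) := by
      show φ (PresentedGroup.of 1) = _
      rw [hφ, PresentedGroup.toGroup.of]
      simp [hf]
    have hφa : φ a = (⟨0, 0, 1⟩ : Hei R) := by
      show φ (b2⁻¹ * b1⁻¹ * b2 * b1) = _
      rw [map_mul, map_mul, map_mul, map_inv, map_inv, hφb1, hφb2, Hei.comm_val]
    -- the detecting subgroup
    set I : Ideal R := Ideal.span {(p : R) ^ (i + 1)} with hI
    have hgen : (p : R) ^ (i + 1) ∈ I := Ideal.subset_span rfl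
    have hpcast : ((p ^ (i + 1) : ℕ) : R) * (1 : R) ∈ I := by
      rw [mul_one]; push_cast; exact hgen
    have hle : Subgroup.closure {a ^ p ^ (i + 1), b1 ^ p ^ (i + 1), b2 ^ p ^ (i + 1)} ≤
        Subgroup.comap φ (Hei.sgr I) := by
      rw [Subgroup.closure_le]
      rintro g hg
      simp only [Set.mem_insert_iff, Set.mem_singleton_iff] at hg
      rcases hg with rfl | rfl | rfl <;>
        · simp only [SetLike.mem_coe, Subgroup.mem_comap, map_pow, hφa, hφb1, hφb2,
            Hei.Z_pow, Hei.X_pow, Hei.Y_pow, Hei.mem_sgr]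
          refine ⟨?_, ?_, ?_⟩ <;> first | exact hpcast | exact I.zero_mem
    have hmem : φ (a ^ p ^ i) ∈ Hei.sgr I := hle hi
    rw [map_pow, hφa, Hei.Z_pow] at hmem
    have hz : ((p ^ i : ℕ) : R) * (1 : R) ∈ I := hmem.2.2
    rw [mul_one] at hz
    have hdvd : (p : R) ^ (i + 1) ∣ ((p ^ i : ℕ) : R) := Ideal.mem_span_singleton.mp hz
    -- cast down to `ZMod (p ^ (i+1))`
    have hdvd' : (p ^ (i + 1) : ℕ) ∣ (p ^ s2 : ℕ) := pow_dvd_pow p hi1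
    let ψ : R →+* ZMod (p ^ (i + 1)) := ZMod.castHom hdvd' _
    have h2 := map_dvd ψ hdvd
    rw [map_pow, map_natCast, map_natCast] at h2
    have hzero : ((p : ZMod (p ^ (i + 1)))) ^ (i + 1) = 0 := by
      rw [← Nat.cast_pow, ZMod.natCast_self]
    rw [hzero, zero_dvd_iff] at h2
    have h3 : (p ^ (i + 1) : ℕ) ∣ p ^ i := (ZMod.natCast_eq_zero_iff _ _).mp h2
    have h4 := (pow_dvd_pow_iff hp.pos.ne' hp.prime.not_unit).mp h3
    omega
end

section
/- Let (m,n1,n2,s1,s2) be an admissible tuple for the prime 2, and let G = G_2(m,n1,n2,s1,s2) with generators b1, b2 and a = [b2,b1]. For each natural number k let H_k be the subgroup of G generated by a^(2^k), b1^(2^(k+1)) and b2^(2^(k+1)), and let K_k be the subgroup generated by a^(2^(k+1)), b1^(2^(k+2)) and b2^(2^(k+2)). Then the least natural number k such that the index of K_k in H_k is strictly less than 8 equals min(n2 - 1, s1, s2). -/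
open Subgroup

variable {Γ : Type*} [Group Γ]

lemma pow_mod_two {q : Γ} (hq : q ^ 2 = 1) (i : ℕ) : q ^ (i % 2) = q ^ i := by
  conv_rhs => rw [← Nat.div_add_mod i 2, pow_add, pow_mul, hq, one_pow, one_mul]

lemma comm_pow (B A C : Γ) (hBA : B * A = A * B * C) (hCA : Commute C A)
    (hCB : Commute C B) (u v : ℕ) : B ^ v * A ^ u = A ^ u * B ^ v * C ^ (u * v) := by
  have h1 : ∀ u : ℕ, B * A ^ u = A ^ u * B * C ^ u := by
    intro u
    induction u with
    | zero => simp
    | succ n ih =>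
      rw [pow_succ, ← mul_assoc, ih, pow_succ]
      rw [mul_assoc (A^n * B), (hCA.pow_left n).eq, ← mul_assoc, mul_assoc (A^n), hBA]
      group
  induction v with
  | zero => simp
  | succ n ih =>
    rw [pow_succ, mul_assoc, h1 u, ← mul_assoc, ← mul_assoc, ih,
      mul_assoc (A^u * B^n) (C^(u*n)) B, (hCB.pow_left (u*n)).eq,
      Nat.mul_succ, pow_add]
    group

lemma conj_sq (g κ d : Γ) (hrel : g * κ * g⁻¹ = κ * d) (hκd : Commute d κ) :
    g * κ ^ 2 * g⁻¹ = κ ^ 2 * d ^ 2 := by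
  have h2 : g * κ ^ 2 * g⁻¹ = (g * κ * g⁻¹) * (g * κ * g⁻¹) := by
    rw [pow_two]; group
  rw [h2, hrel, pow_two, pow_two, mul_assoc, ← mul_assoc d κ d, hκd.eq]
  group

lemma abel_pow_mul (r s t : Γ) (hrs : Commute r s) (hrt : Commute r t) (hst : Commute s t)
    (i j l i' j' l' : ℕ) :
    (r^i*s^j*t^l)*(r^i'*s^j'*t^l') = r^(i+i')*s^(j+j')*t^(l+l') := by
  have c1 : t^l * r^i' = r^i' * t^l := (hrt.symm.pow_pow l i').eq
  have c2 : s^j * r^i' = r^i' * s^j := (hrs.symm.pow_pow j i').eq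
  have c3 : t^l * s^j' = s^j' * t^l := (hst.symm.pow_pow l j').eq
  calc (r^i*s^j*t^l)*(r^i'*s^j'*t^l')
      = r^i * s^j * (t^l * r^i') * (s^j' * t^l') := by group
    _ = r^i * s^j * (r^i' * t^l) * (s^j' * t^l') := by rw [c1]
    _ = r^i * (s^j * r^i') * (t^l * s^j') * t^l' := by group
    _ = r^i * (r^i' * s^j) * (s^j' * t^l) * t^l' := by rw [c2, c3]
    _ = (r^i * r^i') * ((s^j * s^j') * (t^l * t^l')) := by group
    _ = r^(i+i')*s^(j+j')*t^(l+l') := by rw [← pow_add, ← pow_add, ← pow_add]; group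

lemma core (x y z : Γ) (hxy : Commute x y) (hxz : Commute x z) (w : ℕ)
    (hzy : z * y = y * z * (x ^ 2) ^ w) :
    (closure {x^2, y^2, z^2}).relIndex (closure {x, y, z}) ≤ 8 ∧
    ((x ∈ closure {x^2,y^2,z^2} ∨ x⁻¹*y ∈ closure {x^2,y^2,z^2} ∨
        x⁻¹*z ∈ closure {x^2,y^2,z^2} ∨ z ∈ closure {x^2,y^2,z^2}) →
      (closure {x^2,y^2,z^2}).relIndex (closure {x,y,z}) ≤ 4) ∧
    (∀ {T : Type} [Group T] (φ : Γ →* T),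
      (∀ s ∈ ({x^2,y^2,z^2} : Set Γ), φ s = 1) →
      (Function.Injective fun t : ZMod 2 × ZMod 2 × ZMod 2 =>
        φ x ^ t.1.val * φ y ^ t.2.1.val * φ z ^ t.2.2.val) →
      8 ≤ (closure {x^2,y^2,z^2}).relIndex (closure {x,y,z})) := by
  set K : Subgroup Γ := closure {x^2, y^2, z^2} with hKdef
  set H : Subgroup Γ := closure {x, y, z} with hHdef
  set c : Γ := (x ^ 2) ^ w with hcdef
  have hx2K : x^2 ∈ K := subset_closure (by simp)
  have hy2K : y^2 ∈ K := subset_closure (by simp)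
  have hz2K : z^2 ∈ K := subset_closure (by simp)
  have hcK : c ∈ K := pow_mem hx2K w
  have hxH : x ∈ H := subset_closure (by simp)
  have hyH : y ∈ H := subset_closure (by simp)
  have hzH : z ∈ H := subset_closure (by simp)
  have hKH : K ≤ H := by
    rw [hKdef]
    refine (closure_le _).2 ?_
    rintro g hg
    simp only [Set.mem_insert_iff, Set.mem_singleton_iff] at hg
    rcases hg with rfl | rfl | rfl
    exacts [pow_mem hxH 2, pow_mem hyH 2, pow_mem hzH 2]
  have hcy : Commute c y := (hxy.pow_left 2).pow_left w
  have hcz : Commute c z := (hxz.pow_left 2).pow_left w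
  have hcx : Commute c x := ((Commute.refl x).pow_left 2).pow_left w
  -- conjugation identities
  have hyz2 : y * z = z * y * c⁻¹ := by rw [hzy]; group
  have hzyz : z * y * z⁻¹ = y * c := by
    rw [hzy, mul_assoc (y*z), hcz.inv_right.eq]; group
  have hzyz' : z⁻¹ * y * z = y * c⁻¹ := by
    rw [mul_assoc, hyz2]; group
  have hyzy : y * z * y⁻¹ = z * c⁻¹ := by
    rw [hyz2, mul_assoc z y c⁻¹, ← hcy.inv_left.eq]; group
  have hyzy' : y⁻¹ * z * y = z * c := by
    rw [mul_assoc, hzy]; group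
  -- conjugation closure helper
  have hconjgen : ∀ g : Γ, (∀ s ∈ ({x^2,y^2,z^2} : Set Γ), g * s * g⁻¹ ∈ K) →
      ∀ κ ∈ K, g * κ * g⁻¹ ∈ K := by
    intro g hg κ hκ
    rw [hKdef] at hκ
    induction hκ using closure_induction with
    | mem s hs => exact hg s hs
    | one => simpa using one_mem K
    | mul p q hp hq ihp ihq =>
      have e : g*(p*q)*g⁻¹ = (g*p*g⁻¹)*(g*q*g⁻¹) := by group
      rw [e]; exact mul_mem ihp ihq
    | inv p hp ihp =>
      have e : g*p⁻¹*g⁻¹ = (g*p*g⁻¹)⁻¹ := by group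
      rw [e]; exact inv_mem ihp
  have hfix : ∀ g s : Γ, Commute g s → g * s * g⁻¹ ∈ K → True := fun _ _ _ _ => trivial
  have hconj : ∀ h ∈ H, ∀ κ ∈ K, h * κ * h⁻¹ ∈ K := by
    intro h hh
    rw [hHdef] at hh
    have base : ∀ g : Γ, g ∈ ({x,y,z} : Set Γ) →
        (∀ κ ∈ K, g * κ * g⁻¹ ∈ K) ∧ (∀ κ ∈ K, g⁻¹ * κ * g ∈ K) := by
      rintro g hg
      simp only [Set.mem_insert_iff, Set.mem_singleton_iff] at hg
      have fix : ∀ u v : Γ, Commute u v → u * v * u⁻¹ = v := by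
        intro u v huv; rw [huv.eq]; group
      rcases hg with rfl | rfl | rfl
      · constructor <;> intro κ hκ
        · refine hconjgen _ ?_ κ hκ
          rintro s hs
          simp only [Set.mem_insert_iff, Set.mem_singleton_iff] at hs
          rcases hs with rfl | rfl | rfl
          · rw [fix _ _ (Commute.pow_right (Commute.refl g) 2)]; exact hx2K
          · rw [fix _ _ (hxy.pow_right 2)]; exact hy2K
          · rw [fix _ _ (hxz.pow_right 2)]; exact hz2K
        · rw [show g⁻¹*κ*g = g⁻¹*κ*(g⁻¹)⁻¹ by group]
          refine hconjgen _ ?_ κ hκ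
          rintro s hs
          simp only [Set.mem_insert_iff, Set.mem_singleton_iff] at hs
          rcases hs with rfl | rfl | rfl
          · rw [fix _ _ ((Commute.pow_right (Commute.refl g) 2).inv_left)]
            simpa using hx2K
          · rw [fix _ _ ((hxy.pow_right 2).inv_left)]; simpa using hy2K
          · rw [fix _ _ ((hxz.pow_right 2).inv_left)]; simpa using hz2K
      · constructor <;> intro κ hκ
        · refine hconjgen _ ?_ κ hκ
          rintro s hs
          simp only [Set.mem_insert_iff, Set.mem_singleton_iff] at hs
          rcases hs with rfl | rfl | rfl
          · rw [fix _ _ ((hxy.symm.pow_right 2))]; exact hx2K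
          · rw [fix _ _ (Commute.pow_right (Commute.refl g) 2)]; exact hy2K
          · rw [conj_sq g z c⁻¹ hyzy hcz.inv_left]
            exact mul_mem hz2K (pow_mem (inv_mem hcK) 2)
        · rw [show g⁻¹*κ*g = g⁻¹*κ*(g⁻¹)⁻¹ by group]
          refine hconjgen _ ?_ κ hκ
          rintro s hs
          simp only [Set.mem_insert_iff, Set.mem_singleton_iff] at hs
          rcases hs with rfl | rfl | rfl
          · rw [fix _ _ ((hxy.symm.pow_right 2).inv_left)]; simpa using hx2K
          · rw [fix _ _ ((Commute.pow_right (Commute.refl g) 2).inv_left)]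
            simpa using hy2K
          · rw [conj_sq g⁻¹ z c (by rw [inv_inv]; exact hyzy') hcz]
            exact mul_mem hz2K (pow_mem hcK 2)
      · constructor <;> intro κ hκ
        · refine hconjgen _ ?_ κ hκ
          rintro s hs
          simp only [Set.mem_insert_iff, Set.mem_singleton_iff] at hs
          rcases hs with rfl | rfl | rfl
          · rw [fix _ _ ((hxz.symm.pow_right 2))]; exact hx2K
          · rw [conj_sq g y c hzyz hcy]
            exact mul_mem hy2K (pow_mem hcK 2)
          · rw [fix _ _ (Commute.pow_right (Commute.refl g) 2)]; exact hz2K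
        · rw [show g⁻¹*κ*g = g⁻¹*κ*(g⁻¹)⁻¹ by group]
          refine hconjgen _ ?_ κ hκ
          rintro s hs
          simp only [Set.mem_insert_iff, Set.mem_singleton_iff] at hs
          rcases hs with rfl | rfl | rfl
          · rw [fix _ _ ((hxz.symm.pow_right 2).inv_left)]; simpa using hx2K
          · rw [conj_sq g⁻¹ y c⁻¹ (by rw [inv_inv]; exact hzyz') hcy.inv_left]
            exact mul_mem hy2K (pow_mem (inv_mem hcK) 2)
          · rw [fix _ _ ((Commute.pow_right (Commute.refl g) 2).inv_left)]
            simpa using hz2K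
    refine (?_ : (∀ κ ∈ K, h * κ * h⁻¹ ∈ K) ∧ (∀ κ ∈ K, h⁻¹ * κ * h ∈ K)).1
    induction hh using closure_induction with
    | mem g hg => exact base g hg
    | one => constructor <;> (intro κ hκ; simpa using hκ)
    | mul p q hp hq ihp ihq =>
      constructor <;> intro κ hκ
      · rw [show (p*q)*κ*(p*q)⁻¹ = p*(q*κ*q⁻¹)*p⁻¹ by group]
        exact ihp.1 _ (ihq.1 _ hκ)
      · rw [show (p*q)⁻¹*κ*(p*q) = q⁻¹*(p⁻¹*κ*p)*q by group]
        exact ihq.2 _ (ihp.2 _ hκ)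
    | inv p hp ihp =>
      constructor <;> intro κ hκ
      · rw [show p⁻¹*κ*(p⁻¹)⁻¹ = p⁻¹*κ*p by group]
        exact ihp.2 _ hκ
      · rw [show (p⁻¹)⁻¹*κ*p⁻¹ = p*κ*p⁻¹ by group]
        exact ihp.1 _ hκ
  -- the quotient
  letI instN : (K.subgroupOf H).Normal := by
    constructor
    rintro ⟨n, hn⟩ hmem ⟨g, hg⟩
    rw [mem_subgroupOf] at hmem ⊢
    exact hconj g hg n hmem
  set π : H →* H ⧸ K.subgroupOf H := QuotientGroup.mk' (K.subgroupOf H) with hπdef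
  have hπone : ∀ (h : H), (h : Γ) ∈ K → π h = 1 := by
    intro h hk
    rw [hπdef, QuotientGroup.mk'_apply, QuotientGroup.eq_one_iff, mem_subgroupOf]
    exact hk
  set xH : H := ⟨x, hxH⟩
  set yH : H := ⟨y, hyH⟩
  set zH : H := ⟨z, hzH⟩
  set q1 := π xH with hq1def
  set q2 := π yH with hq2def
  set q3 := π zH with hq3def
  have hsq1 : q1 ^ 2 = 1 := by
    rw [hq1def, ← map_pow]; exact hπone _ (by simpa using hx2K)
  have hsq2 : q2 ^ 2 = 1 := by
    rw [hq2def, ← map_pow]; exact hπone _ (by simpa using hy2K)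
  have hsq3 : q3 ^ 2 = 1 := by
    rw [hq3def, ← map_pow]; exact hπone _ (by simpa using hz2K)
  have hq12 : Commute q1 q2 := by
    rw [hq1def, hq2def, Commute, SemiconjBy, ← map_mul, ← map_mul]
    congr 1
    exact Subtype.ext hxy.eq
  have hq13 : Commute q1 q3 := by
    rw [hq1def, hq3def, Commute, SemiconjBy, ← map_mul, ← map_mul]
    congr 1
    exact Subtype.ext hxz.eq
  have hq23 : Commute q2 q3 := by
    have hcH : c ∈ H := hKH hcK
    have e2 : π (zH * yH) = π (yH * zH) * π ⟨c, hcH⟩ := by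
      rw [← map_mul]
      exact congrArg π (Subtype.ext hzy)
    have e3 : q3 * q2 = q2 * q3 := by
      rw [hq2def, hq3def, ← map_mul, ← map_mul, e2, hπone ⟨c, hcH⟩ hcK, mul_one]
    exact e3.symm
  have hprodsq : ∀ i j l : ℕ, (q1^i*q2^j*q3^l)^2 = 1 := by
    intro i j l
    rw [pow_two, abel_pow_mul _ _ _ hq12 hq13 hq23,
      show i+i = 2*i by omega, show j+j = 2*j by omega, show l+l = 2*l by omega,
      pow_mul, pow_mul, pow_mul, hsq1, hsq2, hsq3]
    simp
  have hQrep : ∀ q : H ⧸ K.subgroupOf H, ∃ i j l : ℕ, q = q1^i * q2^j * q3^l := by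
    intro q
    obtain ⟨⟨g, hg⟩, rfl⟩ := QuotientGroup.mk'_surjective (K.subgroupOf H) q
    rw [← hπdef]
    induction hg using closure_induction with
    | mem s hs =>
      simp only [Set.mem_insert_iff, Set.mem_singleton_iff] at hs
      rcases hs with rfl | rfl | rfl
      · exact ⟨1, 0, 0, by simp; rfl⟩
      · exact ⟨0, 1, 0, by simp; rfl⟩
      · exact ⟨0, 0, 1, by simp; rfl⟩
    | one =>
      refine ⟨0, 0, 0, ?_⟩
      simp only [pow_zero, mul_one, one_mul]
      exact map_one π
    | mul p q hp hq ihp ihq =>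
      obtain ⟨i, j, l, hi⟩ := ihp
      obtain ⟨i', j', l', hi'⟩ := ihq
      refine ⟨i+i', j+j', l+l', ?_⟩
      have e : (⟨p*q, mul_mem hp hq⟩ : H) = ⟨p, hp⟩ * ⟨q, hq⟩ := rfl
      rw [e, map_mul, hi, hi', abel_pow_mul _ _ _ hq12 hq13 hq23]
    | inv p hp ihp =>
      obtain ⟨i, j, l, hi⟩ := ihp
      refine ⟨i, j, l, ?_⟩
      have e : (⟨p⁻¹, inv_mem hp⟩ : H) = (⟨p, hp⟩ : H)⁻¹ := rfl
      rw [e, map_inv, hi]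
      exact inv_eq_of_mul_eq_one_right (by rw [← pow_two]; exact hprodsq i j l)
  have hsurj : Function.Surjective (fun t : ZMod 2 × ZMod 2 × ZMod 2 =>
      q1 ^ t.1.val * q2 ^ t.2.1.val * q3 ^ t.2.2.val) := by
    intro q
    obtain ⟨i, j, l, rfl⟩ := hQrep q
    refine ⟨⟨(i : ZMod 2), (j : ZMod 2), (l : ZMod 2)⟩, ?_⟩
    simp only [ZMod.val_natCast]
    rw [pow_mod_two hsq1, pow_mod_two hsq2, pow_mod_two hsq3]
  haveI hfin : Finite (H ⧸ K.subgroupOf H) := Finite.of_surjective _ hsurj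
  have hdom : Nat.card (ZMod 2 × ZMod 2 × ZMod 2) = 8 := by
    simp [Nat.card_prod, Nat.card_zmod]
  have hcard8 : Nat.card (H ⧸ K.subgroupOf H) ≤ 8 := by
    rw [← hdom]; exact Nat.card_le_card_of_surjective _ hsurj
  have hrelidx : K.relIndex H = Nat.card (H ⧸ K.subgroupOf H) :=
    Subgroup.index_eq_card _
  refine ⟨hrelidx ▸ hcard8, ?_, ?_⟩
  · intro hcase
    obtain ⟨r, s, hr2, hs2, hrep⟩ :
        ∃ r s : H ⧸ K.subgroupOf H, r^2 = 1 ∧ s^2 = 1 ∧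
          ∀ q : H ⧸ K.subgroupOf H, ∃ i j : ℕ, q = r^i * s^j := by
      rcases hcase with hx1 | hxy1 | hxz1 | hz1
      · have hq1 : q1 = 1 := hπone xH hx1
        refine ⟨q2, q3, hsq2, hsq3, fun q => ?_⟩
        obtain ⟨i, j, l, rfl⟩ := hQrep q
        exact ⟨j, l, by rw [hq1]; simp⟩
      · have he : q1 = q2 := by
          have mem : x⁻¹*y ∈ H := mul_mem (inv_mem hxH) hyH
          have e : (⟨x⁻¹*y, mem⟩ : H) = xH⁻¹ * yH := rfl
          have := hπone ⟨x⁻¹*y, mem⟩ hxy1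
          rw [e, map_mul, map_inv, ← hq1def, ← hq2def, inv_mul_eq_one] at this
          exact this
        refine ⟨q2, q3, hsq2, hsq3, fun q => ?_⟩
        obtain ⟨i, j, l, rfl⟩ := hQrep q
        exact ⟨i+j, l, by rw [he, ← pow_add]⟩
      · have he : q1 = q3 := by
          have mem : x⁻¹*z ∈ H := mul_mem (inv_mem hxH) hzH
          have e : (⟨x⁻¹*z, mem⟩ : H) = xH⁻¹ * zH := rfl
          have := hπone ⟨x⁻¹*z, mem⟩ hxz1
          rw [e, map_mul, map_inv, ← hq1def, ← hq3def, inv_mul_eq_one] at this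
          exact this
        refine ⟨q2, q3, hsq2, hsq3, fun q => ?_⟩
        obtain ⟨i, j, l, rfl⟩ := hQrep q
        refine ⟨j, i+l, ?_⟩
        rw [he, ← (hq23.pow_pow j i).eq, mul_assoc, ← pow_add]
      · have hq3one : q3 = 1 := hπone zH hz1
        refine ⟨q1, q2, hsq1, hsq2, fun q => ?_⟩
        obtain ⟨i, j, l, rfl⟩ := hQrep q
        exact ⟨i, j, by rw [hq3one]; simp⟩
    have hsurj2 : Function.Surjective (fun t : ZMod 2 × ZMod 2 =>
        r ^ t.1.val * s ^ t.2.val) := by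
      intro q
      obtain ⟨i, j, rfl⟩ := hrep q
      refine ⟨⟨(i : ZMod 2), (j : ZMod 2)⟩, ?_⟩
      simp only [ZMod.val_natCast]
      rw [pow_mod_two hr2, pow_mod_two hs2]
    have hdom2 : Nat.card (ZMod 2 × ZMod 2) = 4 := by
      simp [Nat.card_prod, Nat.card_zmod]
    have : Nat.card (H ⧸ K.subgroupOf H) ≤ 4 := by
      rw [← hdom2]; exact Nat.card_le_card_of_surjective _ hsurj2
    exact hrelidx ▸ this
  · intro T _ φ hφκ hinj
    have hKker : ∀ κ ∈ K, φ κ = 1 := by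
      intro κ hκ
      rw [hKdef] at hκ
      have : closure {x^2,y^2,z^2} ≤ φ.ker := (closure_le _).2 (by
        intro s hs
        rw [SetLike.mem_coe, MonoidHom.mem_ker]
        exact hφκ s hs)
      exact this hκ
    have hιinj : Function.Injective (fun t : ZMod 2 × ZMod 2 × ZMod 2 =>
        π ⟨x ^ t.1.val * y ^ t.2.1.val * z ^ t.2.2.val,
          mul_mem (mul_mem (pow_mem hxH _) (pow_mem hyH _)) (pow_mem hzH _)⟩) := by
      intro s t hst
      apply hinj
      simp only [hπdef, QuotientGroup.mk'_apply] at hst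
      rw [QuotientGroup.eq, mem_subgroupOf] at hst
      have hst2 := hKker _ hst
      simp only [Subgroup.coe_mul, InvMemClass.coe_inv, map_mul, map_inv, map_pow] at hst2
      rw [inv_mul_eq_one] at hst2
      simpa [map_mul, map_pow] using hst2
    have : (8:ℕ) ≤ Nat.card (H ⧸ K.subgroupOf H) := by
      rw [← hdom]
      exact Nat.card_le_card_of_injective _ hιinj
    exact hrelidx ▸ this

-- ### The concrete model group
def Wc (k : ℕ) : Type := ZMod (2^(k+2)) × ZMod (2^(k+2)) × ZMod (2^(k+1))

def wcf (k : ℕ) : ZMod (2^(k+2)) →+* ZMod (2^(k+1)) :=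
  ZMod.castHom (pow_dvd_pow 2 (Nat.le_succ (k+1))) (ZMod (2^(k+1)))

namespace Wc

variable {k : ℕ}

def mk' (x y : ZMod (2^(k+2))) (z : ZMod (2^(k+1))) : Wc k := (x, y, z)

instance : Mul (Wc k) :=
  ⟨fun p q => (p.1 + q.1, p.2.1 + q.2.1, p.2.2 + q.2.2 + wcf k p.2.1 * wcf k q.1)⟩
instance : One (Wc k) := ⟨((0 : ZMod (2^(k+2))), (0 : ZMod (2^(k+2))), (0 : ZMod (2^(k+1))))⟩
instance : Inv (Wc k) := ⟨fun p => (-p.1, -p.2.1, -p.2.2 + wcf k p.2.1 * wcf k p.1)⟩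

lemma mul_fst (p q : Wc k) : (p * q).1 = p.1 + q.1 := rfl
lemma mul_snd1 (p q : Wc k) : (p * q).2.1 = p.2.1 + q.2.1 := rfl
lemma mul_snd2 (p q : Wc k) : (p * q).2.2 = p.2.2 + q.2.2 + wcf k p.2.1 * wcf k q.1 := rfl
lemma one_fst : (1 : Wc k).1 = 0 := rfl
lemma one_snd1 : (1 : Wc k).2.1 = 0 := rfl
lemma one_snd2 : (1 : Wc k).2.2 = 0 := rfl
lemma inv_fst (p : Wc k) : (p⁻¹).1 = -p.1 := rfl
lemma inv_snd1 (p : Wc k) : (p⁻¹).2.1 = -p.2.1 := rfl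
lemma inv_snd2 (p : Wc k) : (p⁻¹).2.2 = -p.2.2 + wcf k p.2.1 * wcf k p.1 := rfl

instance : Group (Wc k) :=
  Group.ofLeftAxioms
    (by
      intro p q r
      refine Prod.ext ?_ (Prod.ext ?_ ?_) <;>
        simp only [mul_fst, mul_snd1, mul_snd2, map_add, map_mul] <;> ring)
    (by
      intro p
      refine Prod.ext ?_ (Prod.ext ?_ ?_) <;>
        simp only [mul_fst, mul_snd1, mul_snd2, one_fst, one_snd1, one_snd2, map_zero] <;> ring)
    (by
      intro p
      refine Prod.ext ?_ (Prod.ext ?_ ?_) <;>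
        simp only [mul_fst, mul_snd1, mul_snd2, one_fst, one_snd1, one_snd2, inv_fst,
          inv_snd1, inv_snd2, map_zero, map_neg, map_add] <;> ring)

lemma mul_def (x y x' y' : ZMod (2^(k+2))) (z z' : ZMod (2^(k+1))) :
    (mk' x y z) * (mk' x' y' z') = mk' (x+x') (y+y') (z+z'+ wcf k y * wcf k x') := rfl

lemma inv_def (x y : ZMod (2^(k+2))) (z : ZMod (2^(k+1))) :
    (mk' x y z)⁻¹ = mk' (-x) (-y) (-z + wcf k y * wcf k x) := rfl

lemma one_def : (1 : Wc k) = mk' 0 0 0 := rfl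

lemma ext_iff {x y x' y' : ZMod (2^(k+2))} {z z' : ZMod (2^(k+1))} :
    mk' (k := k) x y z = mk' x' y' z' ↔ x = x' ∧ y = y' ∧ z = z' := by
  constructor
  · intro h
    exact ⟨congrArg Prod.fst h, congrArg (fun p => p.2.1) h, congrArg (fun p => p.2.2) h⟩
  · rintro ⟨rfl, rfl, rfl⟩; rfl

def B1 : Wc k := mk' 1 0 0
def B2 : Wc k := mk' 0 1 0
def A : Wc k := mk' 0 0 1

lemma B1_pow (t : ℕ) : (B1 : Wc k) ^ t = mk' (t : ZMod (2^(k+2))) 0 0 := by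
  induction t with
  | zero => simp [one_def]
  | succ n ih =>
    rw [pow_succ, ih, B1, mul_def, ext_iff]
    refine ⟨by push_cast; ring, by ring, by simp⟩

lemma B2_pow (t : ℕ) : (B2 : Wc k) ^ t = mk' 0 (t : ZMod (2^(k+2))) 0 := by
  induction t with
  | zero => simp [one_def]
  | succ n ih =>
    rw [pow_succ, ih, B2, mul_def, ext_iff]
    refine ⟨by ring, by push_cast; ring, by simp⟩

lemma A_pow (t : ℕ) : (A : Wc k) ^ t = mk' 0 0 (t : ZMod (2^(k+1))) := by
  induction t with
  | zero => simp [one_def]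
  | succ n ih =>
    rw [pow_succ, ih, A, mul_def, ext_iff]
    refine ⟨by ring, by ring, by push_cast; simp⟩

lemma comm_eq : (B2 : Wc k)⁻¹ * (B1 : Wc k)⁻¹ * B2 * B1 = A := by
  rw [B1, B2, A, inv_def, inv_def, mul_def, mul_def, mul_def, ext_iff]
  refine ⟨by simp, by simp, by simp⟩

end Wc


-- ### lifting to the model
def wgen (k : ℕ) : Fin 2 → Wc k := ![Wc.B1, Wc.B2]

lemma wpow_cast_one {t d : ℕ} (h : d + 1 ≤ t) : ((2^t : ℕ) : ZMod (2^(d+1))) = 0 := by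
  rw [ZMod.natCast_eq_zero_iff]
  exact pow_dvd_pow 2 h

lemma wA_pow_one {k t : ℕ} (h : k + 1 ≤ t) : (Wc.A : Wc k) ^ (2^t) = 1 := by
  rw [Wc.A_pow, Wc.one_def, Wc.ext_iff]
  exact ⟨rfl, rfl, wpow_cast_one h⟩

lemma wB1_pow_one {k t : ℕ} (h : k + 2 ≤ t) : (Wc.B1 : Wc k) ^ (2^t) = 1 := by
  rw [Wc.B1_pow, Wc.one_def, Wc.ext_iff]
  exact ⟨wpow_cast_one h, rfl, rfl⟩

lemma wB2_pow_one {k t : ℕ} (h : k + 2 ≤ t) : (Wc.B2 : Wc k) ^ (2^t) = 1 := by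
  rw [Wc.B2_pow, Wc.one_def, Wc.ext_iff]
  exact ⟨rfl, wpow_cast_one h, rfl⟩

lemma wA_comm (k : ℕ) (p : Wc k) : Commute (Wc.A) p := by
  show _ * _ = _ * _
  refine Prod.ext ?_ (Prod.ext ?_ ?_) <;>
    simp only [Wc.mul_fst, Wc.mul_snd1, Wc.mul_snd2] <;>
    simp only [Wc.A, Wc.mk', map_zero, map_one] <;> ring

lemma wlift_rels (m n1 n2 s1 s2 k : ℕ) (hm : k+1 ≤ m) (hn1 : k+2 ≤ n1) (hn2 : k+2 ≤ n2)
    (hs1 : k+1 ≤ s1) (hs2 : k+1 ≤ s2) :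
    ∀ r ∈ pgRels 2 m n1 n2 s1 s2, FreeGroup.lift (wgen k) r = 1 := by
  intro r hr
  simp only [pgRels, Set.mem_insert_iff, Set.mem_singleton_iff] at hr
  have e0 : FreeGroup.lift (wgen k) (FreeGroup.of 0) = Wc.B1 := by
    rw [FreeGroup.lift_apply_of]; rfl
  have e1 : FreeGroup.lift (wgen k) (FreeGroup.of 1) = Wc.B2 := by
    rw [FreeGroup.lift_apply_of]; rfl
  have ea : FreeGroup.lift (wgen k)
      ((FreeGroup.of 1)⁻¹ * (FreeGroup.of 0)⁻¹ * FreeGroup.of 1 * FreeGroup.of 0) = Wc.A := by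
    rw [map_mul, map_mul, map_mul, map_inv, map_inv, e0, e1, Wc.comm_eq]
  rcases hr with rfl | rfl | rfl | rfl | rfl
  · rw [map_pow, ea, wA_pow_one hm]
  · rw [map_mul, map_mul, map_mul, map_inv, map_inv, e0, ea]
    rw [← (wA_comm k Wc.B1).inv_inv.eq]
    group
  · rw [map_mul, map_mul, map_mul, map_inv, map_inv, e1, ea]
    rw [← (wA_comm k Wc.B2).inv_inv.eq]
    group
  · rw [map_mul, map_inv, map_pow, map_pow, e0, ea, wB1_pow_one hn1, wA_pow_one hs1]
    simp
  · rw [map_mul, map_inv, map_pow, map_pow, e1, ea, wB2_pow_one hn2, wA_pow_one hs2]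
    simp

lemma val2_eq {d : ℕ} (u v : ZMod 2)
    (h : ((2^d * u.val : ℕ) : ZMod (2^(d+1))) = ((2^d * v.val : ℕ) : ZMod (2^(d+1)))) :
    u = v := by
  have hu : u.val < 2 := ZMod.val_lt u
  have hv : v.val < 2 := ZMod.val_lt v
  have hbu : 2^d * u.val < 2^(d+1) := by
    rw [pow_succ]
    exact mul_lt_mul_of_pos_left hu (pow_pos (by norm_num) d)
  have hbv : 2^d * v.val < 2^(d+1) := by
    rw [pow_succ]
    exact mul_lt_mul_of_pos_left hv (pow_pos (by norm_num) d)
  rw [ZMod.natCast_eq_natCast_iff', Nat.mod_eq_of_lt hbu, Nat.mod_eq_of_lt hbv] at h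
  exact ZMod.val_injective 2 (Nat.eq_of_mul_eq_mul_left (pow_pos (by norm_num) d) h)


/-- For `p = 2` and an admissible tuple, in `G = G_2(m,n1,n2,s1,s2)` with `a = [b2,b1]`,
let `H_k = ⟨a^(2^k), b1^(2^(k+1)), b2^(2^(k+1))⟩` and
`K_k = ⟨a^(2^(k+1)), b1^(2^(k+2)), b2^(2^(k+2))⟩`. Then the least `k` with
`[H_k : K_k] < 8` is `min (n2 - 1) (min s1 s2)`. -/
theorem least_index_drop_p_two
    (m n1 n2 s1 s2 : ℕ) (h : Admissible 2 m n1 n2 s1 s2) :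
    let b1 : GG 2 m n1 n2 s1 s2 := PresentedGroup.of 0
    let b2 : GG 2 m n1 n2 s1 s2 := PresentedGroup.of 1
    let a : GG 2 m n1 n2 s1 s2 := b2⁻¹ * b1⁻¹ * b2 * b1
    let H : ℕ → Subgroup (GG 2 m n1 n2 s1 s2) := fun k =>
      Subgroup.closure {a ^ 2 ^ k, b1 ^ 2 ^ (k + 1), b2 ^ 2 ^ (k + 1)}
    let K : ℕ → Subgroup (GG 2 m n1 n2 s1 s2) := fun k =>
      Subgroup.closure {a ^ 2 ^ (k + 1), b1 ^ 2 ^ (k + 2), b2 ^ 2 ^ (k + 2)}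
    IsLeast {k : ℕ | (K k).relIndex (H k) < 8} (min (n2 - 1) (min s1 s2)) := by
  intro b1 b2 a H K
  obtain ⟨⟨hm0, hs1m, hs2m, hmn2, hn21⟩, hA2, hA3, hA4⟩ := h
  have hs1n1 : s1 < n1 := hA3 rfl
  have hrels : ∀ r ∈ pgRels 2 m n1 n2 s1 s2,
      (PresentedGroup.mk (pgRels 2 m n1 n2 s1 s2) r) = 1 := fun r hr =>
    (QuotientGroup.eq_one_iff _).2 (Subgroup.subset_normalClosure hr)
  have hmem1 : ((FreeGroup.of 1)⁻¹ * (FreeGroup.of 0)⁻¹ * (FreeGroup.of 1) * (FreeGroup.of 0)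
      : FreeGroup (Fin 2)) ^ 2 ^ m ∈ pgRels 2 m n1 n2 s1 s2 := by simp [pgRels]
  have hmem2 : ((FreeGroup.of 0)⁻¹ *
      ((FreeGroup.of 1)⁻¹ * (FreeGroup.of 0)⁻¹ * (FreeGroup.of 1) * (FreeGroup.of 0))⁻¹ *
      (FreeGroup.of 0) *
      ((FreeGroup.of 1)⁻¹ * (FreeGroup.of 0)⁻¹ * (FreeGroup.of 1) * (FreeGroup.of 0))
      : FreeGroup (Fin 2)) ∈ pgRels 2 m n1 n2 s1 s2 := by simp [pgRels]
  have hmem3 : ((FreeGroup.of 1)⁻¹ *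
      ((FreeGroup.of 1)⁻¹ * (FreeGroup.of 0)⁻¹ * (FreeGroup.of 1) * (FreeGroup.of 0))⁻¹ *
      (FreeGroup.of 1) *
      ((FreeGroup.of 1)⁻¹ * (FreeGroup.of 0)⁻¹ * (FreeGroup.of 1) * (FreeGroup.of 0))
      : FreeGroup (Fin 2)) ∈ pgRels 2 m n1 n2 s1 s2 := by simp [pgRels]
  have hmem4 : ((FreeGroup.of 0) ^ 2 ^ n1 *
      (((FreeGroup.of 1)⁻¹ * (FreeGroup.of 0)⁻¹ * (FreeGroup.of 1) * (FreeGroup.of 0)) ^ 2 ^ s1)⁻¹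
      : FreeGroup (Fin 2)) ∈ pgRels 2 m n1 n2 s1 s2 := by simp [pgRels]
  have hmem5 : ((FreeGroup.of 1) ^ 2 ^ n2 *
      (((FreeGroup.of 1)⁻¹ * (FreeGroup.of 0)⁻¹ * (FreeGroup.of 1) * (FreeGroup.of 0)) ^ 2 ^ s2)⁻¹
      : FreeGroup (Fin 2)) ∈ pgRels 2 m n1 n2 s1 s2 := by simp [pgRels]
  have hGm : a ^ 2 ^ m = 1 := by
    have h1 := hrels _ hmem1
    simp only [map_mul, map_inv, map_pow] at h1
    exact h1
  have hw2 : b1⁻¹ * a⁻¹ * b1 * a = 1 := by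
    have h1 := hrels _ hmem2
    simp only [map_mul, map_inv, map_pow] at h1
    exact h1
  have hw3 : b2⁻¹ * a⁻¹ * b2 * a = 1 := by
    have h1 := hrels _ hmem3
    simp only [map_mul, map_inv, map_pow] at h1
    exact h1
  have hG1 : b1 ^ 2 ^ n1 = a ^ 2 ^ s1 := by
    have h1 := hrels _ hmem4
    simp only [map_mul, map_inv, map_pow] at h1
    exact mul_inv_eq_one.mp h1
  have hG2 : b2 ^ 2 ^ n2 = a ^ 2 ^ s2 := by
    have h1 := hrels _ hmem5
    simp only [map_mul, map_inv, map_pow] at h1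
    exact mul_inv_eq_one.mp h1
  have hc1 : Commute a b1 := by
    have h3 : b1⁻¹ * (a⁻¹ * b1 * a) = 1 := by rw [← hw2]; group
    have h4 : b1 = a⁻¹ * b1 * a := inv_mul_eq_one.mp h3
    show a * b1 = b1 * a
    conv_lhs => rw [h4]
    group
  have hc2 : Commute a b2 := by
    have h3 : b2⁻¹ * (a⁻¹ * b2 * a) = 1 := by rw [← hw3]; group
    have h4 : b2 = a⁻¹ * b2 * a := inv_mul_eq_one.mp h3
    show a * b2 = b2 * a
    conv_lhs => rw [h4]
    group
  have hba : b2 * b1 = b1 * b2 * a := by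
    show b2 * b1 = b1 * b2 * (b2⁻¹ * b1⁻¹ * b2 * b1)
    group
  have hdouble : ∀ (g : GG 2 m n1 n2 s1 s2) (t : ℕ), g ^ 2 ^ (t+1) = (g ^ 2 ^ t) ^ 2 := by
    intro g t; rw [← pow_mul, pow_succ]
  have hppsub : ∀ (g : GG 2 m n1 n2 s1 s2) {M N : ℕ}, M ≤ N →
      g ^ 2 ^ N = (g ^ 2 ^ M) ^ 2 ^ (N - M) := by
    intro g M N hMN; rw [← pow_mul, ← pow_add, Nat.add_sub_cancel' hMN]
  have hcore : ∀ k : ℕ,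
      (K k).relIndex (H k) ≤ 8 ∧
      ((a^2^k ∈ K k ∨ (a^2^k)⁻¹ * b1^2^(k+1) ∈ K k ∨ (a^2^k)⁻¹ * b2^2^(k+1) ∈ K k ∨
          b2^2^(k+1) ∈ K k) → (K k).relIndex (H k) ≤ 4) ∧
      (∀ (φ : GG 2 m n1 n2 s1 s2 →* Wc k),
        (∀ s ∈ ({(a^2^k)^2, (b1^2^(k+1))^2, (b2^2^(k+1))^2} : Set (GG 2 m n1 n2 s1 s2)),
          φ s = 1) →
        (Function.Injective fun t : ZMod 2 × ZMod 2 × ZMod 2 =>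
          φ (a^2^k) ^ t.1.val * φ (b1^2^(k+1)) ^ t.2.1.val * φ (b2^2^(k+1)) ^ t.2.2.val) →
        8 ≤ (K k).relIndex (H k)) := by
    intro k
    have hxy : Commute (a^2^k) (b1^2^(k+1)) := hc1.pow_pow _ _
    have hxz : Commute (a^2^k) (b2^2^(k+1)) := hc2.pow_pow _ _
    have hzy : b2^2^(k+1) * b1^2^(k+1) = b1^2^(k+1) * b2^2^(k+1) * ((a^2^k)^2)^(2^(k+1)) := by
      rw [comm_pow b2 b1 a hba hc1 hc2 (2^(k+1)) (2^(k+1)), ← hdouble a k, ← pow_mul]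
    have hKk : K k = Subgroup.closure {(a^2^k)^2, (b1^2^(k+1))^2, (b2^2^(k+1))^2} := by
      have e : K k = Subgroup.closure {a^2^(k+1), b1^2^(k+2), b2^2^(k+2)} := rfl
      rw [e, hdouble a k, hdouble b1 (k+1), hdouble b2 (k+1)]
    have hHk : H k = Subgroup.closure {a^2^k, b1^2^(k+1), b2^2^(k+1)} := rfl
    have hco := core (a^2^k) (b1^2^(k+1)) (b2^2^(k+1)) hxy hxz (2^(k+1)) hzy
    rw [← hKk, ← hHk] at hco
    exact ⟨hco.1, hco.2.1, fun φ hφ hinj => hco.2.2 φ hφ hinj⟩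
  constructor
  · -- membership
    show (K (min (n2-1) (min s1 s2))).relIndex (H (min (n2-1) (min s1 s2))) < 8
    set k0 := min (n2-1) (min s1 s2) with hk0def
    clear_value k0
    have hcase : a^2^k0 ∈ K k0 ∨ (a^2^k0)⁻¹ * b1^2^(k0+1) ∈ K k0 ∨
        (a^2^k0)⁻¹ * b2^2^(k0+1) ∈ K k0 ∨ b2^2^(k0+1) ∈ K k0 := by
      rcases le_or_gt s2 s1 with h21 | h12
      · rcases le_or_gt s2 (n2-1) with hA | hB
        · have hk0 : k0 = s2 := by omega
          rcases le_or_gt (s2+2) n2 with hn | hn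
          · left
            rw [hk0, ← hG2, hppsub b2 (show s2+2 ≤ n2 from hn)]
            exact pow_mem (Subgroup.subset_closure (by simp [hk0])) _
          · right; right; left
            have he : a ^ 2^k0 = b2 ^ 2^(k0+1) := by
              rw [hk0, ← hG2]
              exact congrArg (fun t => b2 ^ 2 ^ t) (by omega)
            rw [he, inv_mul_cancel]
            exact one_mem _
        · right; right; right
          have e1 : k0 + 1 = n2 := by omega
          have e2 : s2 = n2 := by omega
          rw [e1, hG2,
            show a^2^s2 = a^2^(k0+1) from congrArg (fun t => a ^ 2 ^ t) (by omega)]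
          exact Subgroup.subset_closure (by simp)
      · rcases hA4 with h' | ⟨_, e1, e2, e3, e4⟩
        · omega
        · right; left
          have hk0 : k0 = s1 := by omega
          have he : a ^ 2^k0 = b1 ^ 2^(k0+1) := by
            rw [hk0, ← hG1]
            exact congrArg (fun t => b1 ^ 2 ^ t) (by omega)
          rw [he, inv_mul_cancel]
          exact one_mem _
    have h4 := (hcore k0).2.1 hcase
    omega
  · -- lower bound
    intro k hk
    simp only [Set.mem_setOf_eq] at hk
    by_contra hlt
    push_neg at hlt
    have hks1 : k+1 ≤ s1 := by omega
    have hks2 : k+1 ≤ s2 := by omega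
    have hkn2 : k+2 ≤ n2 := by omega
    have hkn1 : k+2 ≤ n1 := by omega
    have hkm : k+1 ≤ m := by omega
    set φ := PresentedGroup.toGroup (wlift_rels m n1 n2 s1 s2 k hkm hkn1 hkn2 hks1 hks2)
      with hφdef
    have hφ0 : φ b1 = Wc.B1 := by
      show φ (PresentedGroup.of 0) = Wc.B1
      rw [hφdef, PresentedGroup.toGroup.of]
      rfl
    have hφ1 : φ b2 = Wc.B2 := by
      show φ (PresentedGroup.of 1) = Wc.B2
      rw [hφdef, PresentedGroup.toGroup.of]
      rfl
    have hφa : φ a = Wc.A := by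
      show φ (b2⁻¹ * b1⁻¹ * b2 * b1) = _
      rw [map_mul, map_mul, map_mul, map_inv, map_inv, hφ0, hφ1, Wc.comm_eq]
    have hφκ : ∀ s ∈ ({(a^2^k)^2, (b1^2^(k+1))^2, (b2^2^(k+1))^2} :
        Set (GG 2 m n1 n2 s1 s2)), φ s = 1 := by
      intro s hs
      simp only [Set.mem_insert_iff, Set.mem_singleton_iff] at hs
      rcases hs with rfl | rfl | rfl
      · rw [← hdouble a k, map_pow, hφa, wA_pow_one (le_refl (k+1))]
      · rw [← hdouble b1 (k+1), map_pow, hφ0, wB1_pow_one (le_refl (k+2))]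
      · rw [← hdouble b2 (k+1), map_pow, hφ1, wB2_pow_one (le_refl (k+2))]
    have hφx : φ (a^2^k) = (Wc.A : Wc k)^(2^k) := by rw [map_pow, hφa]
    have hφy : φ (b1^2^(k+1)) = (Wc.B1 : Wc k)^(2^(k+1)) := by rw [map_pow, hφ0]
    have hφz : φ (b2^2^(k+1)) = (Wc.B2 : Wc k)^(2^(k+1)) := by rw [map_pow, hφ1]
    have hval : ∀ t : ZMod 2 × ZMod 2 × ZMod 2,
        φ (a^2^k) ^ t.1.val * φ (b1^2^(k+1)) ^ t.2.1.val * φ (b2^2^(k+1)) ^ t.2.2.val =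
          Wc.mk' ((2^(k+1)*t.2.1.val : ℕ) : ZMod (2^(k+2)))
            ((2^(k+1)*t.2.2.val : ℕ) : ZMod (2^(k+2)))
            ((2^k*t.1.val : ℕ) : ZMod (2^(k+1))) := by
      intro t
      rw [hφx, hφy, hφz, ← pow_mul, ← pow_mul, ← pow_mul, Wc.A_pow, Wc.B1_pow, Wc.B2_pow,
        Wc.mul_def, Wc.mul_def, Wc.ext_iff]
      refine ⟨by simp, by simp, by simp⟩
    have hinj : Function.Injective (fun t : ZMod 2 × ZMod 2 × ZMod 2 =>
        φ (a^2^k) ^ t.1.val * φ (b1^2^(k+1)) ^ t.2.1.val * φ (b2^2^(k+1)) ^ t.2.2.val) := by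
      intro s t hst
      simp only [hval] at hst
      rw [Wc.ext_iff] at hst
      obtain ⟨e1, e2, e3⟩ := hst
      refine Prod.ext ?_ (Prod.ext ?_ ?_)
      · exact val2_eq _ _ e3
      · exact val2_eq _ _ e1
      · exact val2_eq _ _ e2
    have h8 := (hcore k).2.2 φ hφκ hinj
    omega
end

section
/- Let p be a prime and let G be a finite p-group of nilpotency class exactly 2 with G' of order p^m and G/G' ≅ C_{p^n1} × C_{p^n2} with 0 < n2 ≤ n1. Let (p^o1, p^o2) be the maximum, with respect to the lexicographical order, of the set of pairs (|g1|,|g2|) where (g1,g2) ranges over all pairs of elements of G such that G/G' is the internal direct product of the cyclic subgroups generated by the images of g1 and g2, with the image of g_i having order p^(n_i). Then there exists such a pair (b1,b2) with |b_i| = p^(o_i) and b_i^(p^(n_i)) = [b2,b1]^(p^(s_i)) for i = 1, 2, where s_i = m + n_i - o_i. -/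
open scoped commutatorElement

section Central
variable {G : Type*} [Group G]

theorem comm_mul_left' (hz : ∀ g h : G, ⁅g, h⁆ ∈ Subgroup.center G)
    (a b c : G) : ⁅a * b, c⁆ = ⁅a, c⁆ * ⁅b, c⁆ := by
  have h1 : ⁅a * b, c⁆ = a * ⁅b, c⁆ * a⁻¹ * ⁅a, c⁆ := by group
  have h2 : a * ⁅b, c⁆ = ⁅b, c⁆ * a := Subgroup.mem_center_iff.mp (hz b c) a
  rw [h1, h2]
  have h3 : ⁅b, c⁆ * ⁅a, c⁆ = ⁅a, c⁆ * ⁅b, c⁆ := (Subgroup.mem_center_iff.mp (hz b c) _).symm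
  rw [mul_assoc, mul_assoc, mul_inv_cancel_left, h3]

theorem comm_mul_right' (hz : ∀ g h : G, ⁅g, h⁆ ∈ Subgroup.center G)
    (a b c : G) : ⁅a, b * c⁆ = ⁅a, b⁆ * ⁅a, c⁆ := by
  have key := comm_mul_left' hz b c a
  have e : ∀ x y : G, ⁅x, y⁆ = ⁅y, x⁆⁻¹ := fun x y => by group
  rw [e a (b*c), e a b, e a c, key, mul_inv_rev]
  exact (Subgroup.mem_center_iff.mp ((Subgroup.center G).inv_mem (hz c a)) _).symm

theorem comm_inv_left' (hz : ∀ g h : G, ⁅g, h⁆ ∈ Subgroup.center G)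
    (a c : G) : ⁅a⁻¹, c⁆ = ⁅a, c⁆⁻¹ := by
  have key := comm_mul_left' hz a a⁻¹ c
  simp only [mul_inv_cancel] at key
  have h1 : ⁅(1:G), c⁆ = 1 := by group
  rw [h1] at key
  exact eq_inv_of_mul_eq_one_right key.symm

theorem comm_inv_right' (hz : ∀ g h : G, ⁅g, h⁆ ∈ Subgroup.center G)
    (a c : G) : ⁅a, c⁻¹⁆ = ⁅a, c⁆⁻¹ := by
  have key := comm_mul_right' hz a c c⁻¹
  simp only [mul_inv_cancel] at key
  have h1 : ⁅a, (1:G)⁆ = 1 := by group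
  rw [h1] at key
  exact eq_inv_of_mul_eq_one_right key.symm

theorem comm_pow_left' (hz : ∀ g h : G, ⁅g, h⁆ ∈ Subgroup.center G)
    (a c : G) (k : ℕ) : ⁅a ^ k, c⁆ = ⁅a, c⁆ ^ k := by
  induction k with
  | zero => simp
  | succ n ih => rw [pow_succ, comm_mul_left' hz, ih, pow_succ]

theorem comm_pow_right' (hz : ∀ g h : G, ⁅g, h⁆ ∈ Subgroup.center G)
    (a c : G) (k : ℕ) : ⁅a, c ^ k⁆ = ⁅a, c⁆ ^ k := by
  induction k with
  | zero => simp
  | succ n ih => rw [pow_succ, comm_mul_right' hz, ih, pow_succ]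

end Central

theorem zpowers_pow_coprime' {G : Type*} [Group G] (x : G) (k : ℕ)
    (h : Nat.Coprime k (orderOf x)) : Subgroup.zpowers (x ^ k) = Subgroup.zpowers x := by
  refine le_antisymm (Subgroup.zpowers_le.mpr (Subgroup.npow_mem_zpowers x k)) ?_
  obtain ⟨m, hm⟩ := exists_pow_eq_self_of_coprime h
  exact Subgroup.zpowers_le.mpr ⟨m, by simpa using hm⟩

theorem key_exp {G : Type*} [Group G] [Finite G] (p m n o : ℕ) (hp : p.Prime) (c b : G)
    (hc : orderOf c = p ^ m) (hb : orderOf b = p ^ o) (hno : n ≤ o)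
    (hmem : b ^ p ^ n ∈ Subgroup.zpowers c) :
    ∃ u : ℕ, Nat.Coprime u p ∧ b ^ p ^ n = c ^ (p ^ (m + n - o) * u) := by
  have hppos : 0 < p := hp.pos
  obtain ⟨z, hz⟩ := Subgroup.mem_zpowers_iff.mp hmem
  have hmpos : (0 : ℤ) < (p : ℤ) ^ m := by positivity
  set t : ℕ := (z % ((p : ℤ) ^ m)).toNat with ht_def
  have htz : (t : ℤ) = z % ((p : ℤ) ^ m) :=
    Int.toNat_of_nonneg (Int.emod_nonneg z (ne_of_gt hmpos))
  have hct : c ^ t = b ^ p ^ n := by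
    rw [← hz, ← zpow_natCast, htz]
    rw [show ((p : ℤ) ^ m) = ((orderOf c : ℕ) : ℤ) by rw [hc]; push_cast; ring]
    exact zpow_mod_orderOf c z
  have htlt : t < p ^ m := by
    have h1 := Int.emod_lt_of_pos z hmpos
    have h2 : (t : ℤ) < ((p ^ m : ℕ) : ℤ) := by rw [htz]; push_cast; exact h1
    exact_mod_cast h2
  -- order of b ^ p ^ n
  have hord1 : orderOf (b ^ p ^ n) = p ^ (o - n) := by
    rw [orderOf_pow, hb, Nat.gcd_eq_right (pow_dvd_pow p hno), Nat.pow_div hno hppos]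
  by_cases h0 : t = 0
  · have hone : b ^ p ^ n = 1 := by rw [← hct, h0, pow_zero]
    have hdvd : p ^ o ∣ p ^ n := hb ▸ orderOf_dvd_of_pow_eq_one hone
    have hon : o = n := le_antisymm ((Nat.pow_dvd_pow_iff_le_right hp.one_lt).mp hdvd) hno
    refine ⟨1, Nat.coprime_one_left p, ?_⟩
    rw [hone, mul_one, hon]
    have : m + n - n = m := by omega
    rw [this, ← hc, pow_orderOf_eq_one]
  · -- nonzero case
    have hord2 : orderOf (c ^ t) = p ^ m / Nat.gcd (p ^ m) t := by rw [orderOf_pow, hc]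
    have hdiv : p ^ m / Nat.gcd (p ^ m) t = p ^ (o - n) := by
      rw [← hord2, hct, hord1]
    have hgdvd : Nat.gcd (p ^ m) t ∣ p ^ m := Nat.gcd_dvd_left _ _
    have hkey : p ^ (o - n) * Nat.gcd (p ^ m) t = p ^ m := by
      rw [← hdiv, Nat.div_mul_cancel hgdvd]
    have honm : o - n ≤ m := by
      have : p ^ (o - n) ∣ p ^ m := ⟨_, hkey.symm⟩
      exact (Nat.pow_dvd_pow_iff_le_right hp.one_lt).mp this
    have hs : m + n - o = m - (o - n) := by omega
    have hgcd : Nat.gcd (p ^ m) t = p ^ (m + n - o) := by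
      have h3 : p ^ (o - n) * Nat.gcd (p ^ m) t = p ^ (o - n) * p ^ (m - (o - n)) := by
        rw [hkey, ← pow_add]; congr 1; omega
      have := Nat.eq_of_mul_eq_mul_left (Nat.pow_pos hppos) h3
      rw [this, hs]
    have hsd : p ^ (m + n - o) ∣ t := hgcd ▸ Nat.gcd_dvd_right _ _
    refine ⟨t / p ^ (m + n - o), ?_, ?_⟩
    · rw [Nat.coprime_comm, hp.coprime_iff_not_dvd]
      intro hpd
      have hslt : m + n - o < m := by
        rcases Nat.lt_or_ge (m + n - o) m with h | h
        · exact h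
        · exfalso
          have : p ^ m ∣ t := by
            have : Nat.gcd (p ^ m) t = p ^ m := by rw [hgcd]; congr 1; omega
            exact this ▸ Nat.gcd_dvd_right _ _
          exact h0 (Nat.eq_zero_of_dvd_of_lt this htlt)
      have hdvd2 : p ^ (m + n - o + 1) ∣ t := by
        obtain ⟨v, hv⟩ := hsd
        obtain ⟨w, hw⟩ : p ∣ v := by
          rwa [hv, Nat.mul_div_cancel_left v (Nat.pow_pos hppos)] at hpd
        exact ⟨w, by rw [hv, hw, pow_succ]; ring⟩
      have hdvd3 : p ^ (m + n - o + 1) ∣ Nat.gcd (p ^ m) t :=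
        Nat.dvd_gcd (pow_dvd_pow p (by omega)) hdvd2
      rw [hgcd] at hdvd3
      have := (Nat.pow_dvd_pow_iff_le_right hp.one_lt).mp hdvd3
      omega
    · rw [← hct, Nat.mul_div_cancel' hsd]

open Pointwise


/-- `GoodPair p n1 n2 g1 g2` says that the images `x1, x2` of `g1, g2` in the
abelianization `G/G'` realize `G/G'` as the internal direct product
`⟨x1⟩ × ⟨x2⟩` with `x_i` of order `p^(n_i)`. -/
def GoodPair (p n1 n2 : ℕ) {G : Type*} [Group G] (g1 g2 : G) : Prop :=
  Subgroup.closure {Abelianization.of g1} ⊔ Subgroup.closure {Abelianization.of g2} = ⊤ ∧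
  Subgroup.closure {Abelianization.of g1} ⊓ Subgroup.closure {Abelianization.of g2} = ⊥ ∧
  orderOf (Abelianization.of g1) = p ^ n1 ∧ orderOf (Abelianization.of g2) = p ^ n2

/-- `(A, B)` is the maximum, in the lexicographic order, of the set of pairs of orders
`(|g1|, |g2|)` where `(g1, g2)` ranges over the pairs with `GoodPair p n1 n2 g1 g2`. -/
def IsLexMaxOrders (G : Type*) [Group G] (p n1 n2 A B : ℕ) : Prop :=
  (∃ b1 b2 : G, GoodPair p n1 n2 b1 b2 ∧ orderOf b1 = A ∧ orderOf b2 = B) ∧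
  ∀ g1 g2 : G, GoodPair p n1 n2 g1 g2 →
    orderOf g1 < A ∨ (orderOf g1 = A ∧ orderOf g2 ≤ B)

/-- Let `G` be a finite `p`-group of nilpotency class exactly 2 with `|G'| = p^m` and
`G/G' ≅ C_{p^n1} × C_{p^n2}` (`0 < n2 ≤ n1`), and let `(p^o1, p^o2)` be the
lexicographic maximum of the pairs of orders of suitable generating pairs. Then there is
such a pair `(b1, b2)` with `|b_i| = p^(o_i)` and `b_i^(p^(n_i)) = [b2,b1]^(p^(s_i))`
where `s_i = m + n_i - o_i`. -/
theorem exists_normalized_basis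
    (p : ℕ) (hp : p.Prime) (G : Type*) [Group G] [Finite G] (hGp : IsPGroup p G)
    (hclass : commutator G ≤ Subgroup.center G) (hnt : commutator G ≠ ⊥)
    (m n1 n2 o1 o2 : ℕ)
    (hm : Nat.card ↥(commutator G) = p ^ m)
    (hn2 : 0 < n2) (hn12 : n2 ≤ n1)
    (hab : Nonempty (Abelianization G ≃*
      Multiplicative (ZMod (p ^ n1)) × Multiplicative (ZMod (p ^ n2))))
    (hmax : IsLexMaxOrders G p n1 n2 (p ^ o1) (p ^ o2)) :
    ∃ b1 b2 : G, GoodPair p n1 n2 b1 b2 ∧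
      orderOf b1 = p ^ o1 ∧ orderOf b2 = p ^ o2 ∧
      b1 ^ p ^ n1 = (b2⁻¹ * b1⁻¹ * b2 * b1) ^ p ^ (m + n1 - o1) ∧
      b2 ^ p ^ n2 = (b2⁻¹ * b1⁻¹ * b2 * b1) ^ p ^ (m + n2 - o2) := by
  obtain ⟨⟨b1, b2, hgp, hb1, hb2⟩, -⟩ := hmax
  obtain ⟨hsup, hinf, hn1', hn2'⟩ := hgp
  have hzc : ∀ g h : G, ⁅g, h⁆ ∈ Subgroup.center G := fun g h =>
    hclass (Subgroup.commutator_mem_commutator (Subgroup.mem_top g) (Subgroup.mem_top h))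
  have hker : (Abelianization.of : G →* Abelianization G).ker = commutator G := by
    ext g
    exact QuotientGroup.eq_one_iff g
  set H := Subgroup.closure ({b1, b2} : Set G) with hH
  have hmapH : H.map (Abelianization.of : G →* Abelianization G) = ⊤ := by
    rw [hH, MonoidHom.map_closure, Set.image_insert_eq, Set.image_singleton,
      show ({Abelianization.of b1, Abelianization.of b2} :
        Set (Abelianization G)) = {Abelianization.of b1} ∪ {Abelianization.of b2} from rfl,
      Subgroup.closure_union]
    exact hsup
  have hsupH : H ⊔ commutator G = ⊤ := by
    rw [← hker, ← Subgroup.comap_map_eq, hmapH, Subgroup.comap_top]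
  have hcomm_le : commutator G ≤ H := by
    rw [commutator_def, Subgroup.commutator_le]
    intro g _ h _
    have hg : g ∈ (H : Set G) * (commutator G : Set G) := by
      rw [← Subgroup.mul_normal, hsupH]; trivial
    have hh : h ∈ (H : Set G) * (commutator G : Set G) := by
      rw [← Subgroup.mul_normal, hsupH]; trivial
    obtain ⟨x, hx, z, hzmem, hgx⟩ := hg
    obtain ⟨y, hy, w, hwmem, hhy⟩ := hh
    have hzc' : z ∈ Subgroup.center G := hclass hzmem
    have hwc : w ∈ Subgroup.center G := hclass hwmem
    have hxy : ⁅g, h⁆ = ⁅x, y⁆ := by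
      rw [← hgx, ← hhy, comm_mul_left' hzc, comm_mul_right' hzc x y w,
        show ⁅z, y * w⁆ = 1 from commutatorElement_eq_one_iff_commute.mpr
          ((Subgroup.mem_center_iff.mp hzc' _).symm),
        show ⁅x, w⁆ = 1 from commutatorElement_eq_one_iff_commute.mpr
          (Subgroup.mem_center_iff.mp hwc x),
        mul_one, mul_one]
    rw [hxy, commutatorElement_def]
    exact H.mul_mem (H.mul_mem (H.mul_mem hx hy) (H.inv_mem hx)) (H.inv_mem hy)
  have htop : H = ⊤ := le_antisymm le_top (by rw [← hsupH]; exact sup_le le_rfl hcomm_le)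
  have hmemtop : ∀ g : G, g ∈ H := fun g => htop ▸ Subgroup.mem_top g
  set c := ⁅b2, b1⁆ with hc_def
  have step1 : ∀ h : G, ⁅b1, h⁆ ∈ Subgroup.zpowers c ∧ ⁅b2, h⁆ ∈ Subgroup.zpowers c := by
    intro h
    refine Subgroup.closure_induction
      (p := fun h _ => ⁅b1, h⁆ ∈ Subgroup.zpowers c ∧ ⁅b2, h⁆ ∈ Subgroup.zpowers c)
      ?_ ?_ ?_ ?_ (hmemtop h)
    · intro x hx
      simp only [Set.mem_insert_iff, Set.mem_singleton_iff] at hx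
      show ⁅b1, x⁆ ∈ Subgroup.zpowers c ∧ ⁅b2, x⁆ ∈ Subgroup.zpowers c
      rcases hx with hx | hx <;> rw [hx]
      · constructor
        · rw [commutatorElement_self]; exact (Subgroup.zpowers c).one_mem
        · exact Subgroup.mem_zpowers c
      · constructor
        · rw [show ⁅b1, b2⁆ = c⁻¹ from (commutatorElement_inv b2 b1).symm]
          exact (Subgroup.zpowers c).inv_mem (Subgroup.mem_zpowers c)
        · rw [commutatorElement_self]; exact (Subgroup.zpowers c).one_mem
    · show ⁅b1, (1:G)⁆ ∈ Subgroup.zpowers c ∧ ⁅b2, (1:G)⁆ ∈ Subgroup.zpowers c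
      constructor <;> · rw [commutatorElement_one_right]; exact (Subgroup.zpowers c).one_mem
    · intro x y _ _ hx hy
      show ⁅b1, x * y⁆ ∈ Subgroup.zpowers c ∧ ⁅b2, x * y⁆ ∈ Subgroup.zpowers c
      constructor
      · rw [comm_mul_right' hzc]; exact (Subgroup.zpowers c).mul_mem hx.1 hy.1
      · rw [comm_mul_right' hzc]; exact (Subgroup.zpowers c).mul_mem hx.2 hy.2
    · intro x _ hx
      show ⁅b1, x⁻¹⁆ ∈ Subgroup.zpowers c ∧ ⁅b2, x⁻¹⁆ ∈ Subgroup.zpowers c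
      constructor
      · rw [comm_inv_right' hzc]; exact (Subgroup.zpowers c).inv_mem hx.1
      · rw [comm_inv_right' hzc]; exact (Subgroup.zpowers c).inv_mem hx.2
  have step2 : commutator G = Subgroup.zpowers c := by
    refine le_antisymm ?_ (Subgroup.zpowers_le.mpr
      (Subgroup.commutator_mem_commutator (Subgroup.mem_top b2) (Subgroup.mem_top b1)))
    rw [commutator_def, Subgroup.commutator_le]
    intro g _ h _
    refine Subgroup.closure_induction
      (p := fun g _ => ⁅g, h⁆ ∈ Subgroup.zpowers c) ?_ ?_ ?_ ?_ (hmemtop g)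
    · intro x hx
      simp only [Set.mem_insert_iff, Set.mem_singleton_iff] at hx
      show ⁅x, h⁆ ∈ Subgroup.zpowers c
      rcases hx with hx | hx <;> rw [hx]
      · exact (step1 h).1
      · exact (step1 h).2
    · show ⁅(1:G), h⁆ ∈ Subgroup.zpowers c
      rw [commutatorElement_one_left]; exact (Subgroup.zpowers c).one_mem
    · intro x y _ _ hx hy
      show ⁅x * y, h⁆ ∈ Subgroup.zpowers c
      rw [comm_mul_left' hzc]; exact (Subgroup.zpowers c).mul_mem hx hy
    · intro x _ hx
      show ⁅x⁻¹, h⁆ ∈ Subgroup.zpowers c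
      rw [comm_inv_left' hzc]; exact (Subgroup.zpowers c).inv_mem hx
  rw [step2, Nat.card_zpowers] at hm
  -- memberships of powers in ⟨c⟩
  have hmem1 : b1 ^ p ^ n1 ∈ Subgroup.zpowers c := by
    rw [← step2, ← hker]
    have : Abelianization.of (b1 ^ p ^ n1) = 1 := by
      rw [map_pow, ← hn1', pow_orderOf_eq_one]
    exact this
  have hmem2 : b2 ^ p ^ n2 ∈ Subgroup.zpowers c := by
    rw [← step2, ← hker]
    have : Abelianization.of (b2 ^ p ^ n2) = 1 := by
      rw [map_pow, ← hn2', pow_orderOf_eq_one]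
    exact this
  have hn1o1 : n1 ≤ o1 := by
    refine (Nat.pow_dvd_pow_iff_le_right hp.one_lt).mp ?_
    rw [← hn1', ← hb1]
    exact orderOf_map_dvd _ b1
  have hn2o2 : n2 ≤ o2 := by
    refine (Nat.pow_dvd_pow_iff_le_right hp.one_lt).mp ?_
    rw [← hn2', ← hb2]
    exact orderOf_map_dvd _ b2
  obtain ⟨u1, hu1, hrel1⟩ := key_exp p m n1 o1 hp c b1 hm hb1 hn1o1 hmem1
  obtain ⟨u2, hu2, hrel2⟩ := key_exp p m n2 o2 hp c b2 hm hb2 hn2o2 hmem2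
  refine ⟨b1 ^ u2, b2 ^ u1, ?_, ?_, ?_, ?_, ?_⟩
  case _ =>  -- GoodPair
    have hc1 : Nat.Coprime u2 (orderOf (Abelianization.of b1)) := by
      rw [hn1']; exact hu2.pow_right _
    have hc2 : Nat.Coprime u1 (orderOf (Abelianization.of b2)) := by
      rw [hn2']; exact hu1.pow_right _
    have e1 : Subgroup.closure {Abelianization.of (b1 ^ u2)} =
        Subgroup.closure {Abelianization.of b1} := by
      rw [map_pow, ← Subgroup.zpowers_eq_closure, ← Subgroup.zpowers_eq_closure,
        zpowers_pow_coprime' _ _ hc1]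
    have e2 : Subgroup.closure {Abelianization.of (b2 ^ u1)} =
        Subgroup.closure {Abelianization.of b2} := by
      rw [map_pow, ← Subgroup.zpowers_eq_closure, ← Subgroup.zpowers_eq_closure,
        zpowers_pow_coprime' _ _ hc2]
    refine ⟨?_, ?_, ?_, ?_⟩
    · rw [e1, e2]; exact hsup
    · rw [e1, e2]; exact hinf
    · rw [map_pow, Nat.Coprime.orderOf_pow hc1.symm, hn1']
    · rw [map_pow, Nat.Coprime.orderOf_pow hc2.symm, hn2']
  case _ =>
    rw [Nat.Coprime.orderOf_pow (by rw [hb1]; exact (hu2.pow_right _).symm), hb1]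
  case _ =>
    rw [Nat.Coprime.orderOf_pow (by rw [hb2]; exact (hu1.pow_right _).symm), hb2]
  all_goals {
    have hbr : (b2 ^ u1)⁻¹ * (b1 ^ u2)⁻¹ * (b2 ^ u1) * (b1 ^ u2) = c ^ (u1 * u2) := by
      have e0 : (b2 ^ u1)⁻¹ * (b1 ^ u2)⁻¹ * (b2 ^ u1) * (b1 ^ u2)
          = ⁅(b2 ^ u1)⁻¹, (b1 ^ u2)⁻¹⁆ := by group
      rw [e0, comm_inv_left' hzc, comm_inv_right' hzc, inv_inv,
        comm_pow_left' hzc, comm_pow_right' hzc, ← pow_mul, ← hc_def]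
      congr 1
      ring
    rw [hbr, ← pow_mul, ← pow_mul]
    first
    | (rw [show u2 * p ^ n1 = p ^ n1 * u2 from mul_comm _ _, pow_mul, hrel1, ← pow_mul]
       congr 1; ring)
    | (rw [show u1 * p ^ n2 = p ^ n2 * u1 from mul_comm _ _, pow_mul, hrel2, ← pow_mul]
       congr 1; ring)
  }
end
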